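/- arXiv:2504.17958 — 2 statements merged into one kernel-verified Lean document; each statement's English description precedes it below -/
import Mathlib

section
/- Sufficient condition for dissipativity (Proposition 3.2): suppose b and σ satisfy the standing assumptions and that there exists a constant γ such that ⟨b(x,μ,a) − b(x',μ,a), x − x'⟩ + (1/2)|σ(x,μ,a) − σ(x',μ,a)|² ≤ −γ|x − x'|² for all x, x' ∈ ℝ^d, μ ∈ P₂(ℝ^d), a ∈ A, and that η := γ − (L_{bμ} + L_{σx}·L_{σμ} + (1/2)·L_{σμ}²) > 0. Then for every a ∈ A and every pair of square-integrable ℝ^d-valued random variables ξ, ξ' one has E[⟨b(ξ,P_ξ,a) − b(ξ',P_{ξ'},a), ξ − ξ'⟩ + (1/2)|σ(ξ,P_ξ,a) − σ(ξ',P_{ξ'},a)|²] ≤ −η E[|ξ − ξ'|²]. -/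
open MeasureTheory ProbabilityTheory Filter Set
open scoped ENNReal NNReal Topology InnerProductSpace

noncomputable section

instance matMeasurableSpace {d m : ℕ} : MeasurableSpace (Matrix (Fin d) (Fin m) ℝ) :=
  MeasurableSpace.pi

/-- The state space `ℝ^d`. -/
abbrev Vec (d : ℕ) := EuclideanSpace ℝ (Fin d)

/-- Frobenius norm of a `d × m` matrix: `|σ| = (tr (σ σᵀ))^{1/2}`. -/
def matNorm {d m : ℕ} (σ : Matrix (Fin d) (Fin m) ℝ) : ℝ :=
  Real.sqrt (∑ i, ∑ j, (σ i j) ^ 2)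

/-- Second moment of a measure on `ℝ^d`. -/
def secondMoment {d : ℕ} (μ : Measure (Vec d)) : ℝ≥0∞ := ∫⁻ x, (‖x‖₊ : ℝ≥0∞) ^ 2 ∂μ

/-- Membership in the Wasserstein space `P₂(ℝ^d)`: Borel probability measures with
finite second moment. -/
def MemP2 {d : ℕ} (μ : Measure (Vec d)) : Prop :=
  IsProbabilityMeasure μ ∧ secondMoment μ < ⊤

/-- `π` is a coupling of `μ` and `ν`. -/
def IsCoupling {d : ℕ} (π : Measure (Vec d × Vec d)) (μ ν : Measure (Vec d)) : Prop :=
  π.map Prod.fst = μ ∧ π.map Prod.snd = ν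

/-- Squared 2-Wasserstein distance. -/
def W2sq {d : ℕ} (μ ν : Measure (Vec d)) : ℝ≥0∞ :=
  ⨅ (π : Measure (Vec d × Vec d)) (_ : IsCoupling π μ ν), ∫⁻ p, (‖p.1 - p.2‖₊ : ℝ≥0∞) ^ 2 ∂π

/-- The 2-Wasserstein distance `W₂`. -/
def W2 {d : ℕ} (μ ν : Measure (Vec d)) : ℝ := Real.sqrt (W2sq μ ν).toReal

/-- A set of measures is (sequentially) compact for the `W₂` distance. -/
def W2SeqCompact {d : ℕ} (K : Set (Measure (Vec d))) : Prop :=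
  (∀ μ ∈ K, MemP2 μ) ∧
  ∀ u : ℕ → Measure (Vec d), (∀ n, u n ∈ K) →
    ∃ (ν : Measure (Vec d)) (φ : ℕ → ℕ), ν ∈ K ∧ StrictMono φ ∧
      Tendsto (fun n => W2 (u (φ n)) ν) atTop (𝓝 0)

/-- `B` is an `m`-dimensional Brownian motion on `(Ω, F, P)` adapted to the filtration `F`. -/
structure IsBM {Ω : Type*} {m0 : MeasurableSpace Ω} (P : Measure Ω)
    (F : Filtration ℝ m0) {m : ℕ} (B : ℝ → Ω → (Fin m → ℝ)) : Prop where
  init : ∀ᵐ ω ∂P, B 0 ω = 0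
  contPaths : ∀ᵐ ω ∂P, Continuous fun t => B t ω
  adapted : ∀ t : ℝ, StronglyMeasurable[F t] (B t)
  indepIncr : ∀ s t : ℝ, 0 ≤ s → s ≤ t →
    Indep (MeasurableSpace.comap (fun ω => B t ω - B s ω) inferInstance) (F s) P
  gaussIncr : ∀ s t : ℝ, 0 ≤ s → s ≤ t → ∀ j : Fin m,
    P.map (fun ω => B t ω j - B s ω j) = gaussianReal 0 ((t - s).toNNReal)
  coordIndep : ∀ s t : ℝ, 0 ≤ s → s ≤ t →
    iIndepFun (fun j ω => B t ω j - B s ω j) P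

/-- The law `P_ξ` of a random variable `ξ`. -/
def law {Ω : Type*} {m0 : MeasurableSpace Ω} (P : Measure Ω) {d : ℕ}
    (ξ : Ω → Vec d) : Measure (Vec d) :=
  P.map ξ

/-- `i`-th vector of the canonical basis of `ℝ^d`. -/
def esingle {d : ℕ} (i : Fin d) : Vec d := EuclideanSpace.single i (1 : ℝ)

/-- The generator of the controlled McKean-Vlasov dynamics applied to a test function `φ`:
`L φ(x,μ,a) = ⟨b(x,μ,a), ∇φ(x)⟩ + ½ tr(σσᵀ(x,μ,a) ∇²φ(x))`. -/
def gen {d m : ℕ} {A : Type*} (b : Vec d → Measure (Vec d) → A → Vec d)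
    (σ : Vec d → Measure (Vec d) → A → Matrix (Fin d) (Fin m) ℝ)
    (φ : Vec d → ℝ) (x : Vec d) (μ : Measure (Vec d)) (a : A) : ℝ :=
  fderiv ℝ φ x (b x μ a)
    + (1 / 2) * ∑ i : Fin d, ∑ j : Fin d,
        (∑ k : Fin m, σ x μ a i k * σ x μ a j k) *
          (fderiv ℝ (fun y => fderiv ℝ φ y (esingle j)) x (esingle i))

/-- Test functions for the martingale-problem formulation: `C²` with bounded
function, gradient and Hessian. -/
def IsTestCb2 {d : ℕ} (φ : Vec d → ℝ) : Prop :=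
  ContDiff ℝ 2 φ ∧ ∃ C : ℝ, ∀ x, |φ x| ≤ C ∧ ‖fderiv ℝ φ x‖ ≤ C ∧
    ‖fderiv ℝ (fderiv ℝ φ) x‖ ≤ C

/-- `X` is a solution on `[t,T]` of the controlled McKean-Vlasov equation
`dX_s = b(X_s, P_{X_s}, α_s) ds + σ(X_s, P_{X_s}, α_s) dB_s`, `X_t = ξ`
(martingale-problem formulation): `X` is continuous, adapted, square integrable,
starts from `ξ`, and for every test function `φ` the process
`φ(X_s) - ∫_t^s Lφ(X_r, P_{X_r}, α_r) dr` is a martingale on `[t,T]`. -/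
structure IsSol {Ω : Type*} {m0 : MeasurableSpace Ω} (P : Measure Ω)
    (F : Filtration ℝ m0) {d m : ℕ} {A : Type*}
    (b : Vec d → Measure (Vec d) → A → Vec d)
    (σ : Vec d → Measure (Vec d) → A → Matrix (Fin d) (Fin m) ℝ)
    (t T : ℝ) (ξ : Ω → Vec d) (α : ℝ → Ω → A) (X : ℝ → Ω → Vec d) : Prop where
  contPaths : ∀ᵐ ω ∂P, ContinuousOn (fun s => X s ω) (Icc t T)
  adapted : ∀ s ∈ Icc t T, StronglyMeasurable[F s] (X s)
  init : X t =ᵐ[P] ξ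
  sqInt : ∀ s ∈ Icc t T, MemLp (X s) 2 P
  mpInt : ∀ φ : Vec d → ℝ, IsTestCb2 φ → ∀ s ∈ Icc t T,
    Integrable (fun ω => φ (X s ω)
      - ∫ r in t..s, gen b σ φ (X r ω) (P.map (X r)) (α r ω)) P
  mart : ∀ φ : Vec d → ℝ, IsTestCb2 φ → ∀ s₁ ∈ Icc t T, ∀ s₂ ∈ Icc t T, s₁ ≤ s₂ →
    P[(fun ω => φ (X s₂ ω) - ∫ r in t..s₂, gen b σ φ (X r ω) (P.map (X r)) (α r ω)) | F s₁]
      =ᵐ[P] fun ω => φ (X s₁ ω) - ∫ r in t..s₁, gen b σ φ (X r ω) (P.map (X r)) (α r ω)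

/-- Admissible controls: progressively measurable `A`-valued processes. -/
def IsAdmissible {Ω : Type*} {m0 : MeasurableSpace Ω} (F : Filtration ℝ m0)
    {A : Type*} [TopologicalSpace A] (α : ℝ → Ω → A) : Prop :=
  ProgMeasurable F α

/-- Standing assumptions on the coefficients `b` and `σ` (Assumptions 2.1). -/
structure StandingCoeffs {d m : ℕ} {A : Type*} [MeasurableSpace A] [TopologicalSpace A]
    (b : Vec d → Measure (Vec d) → A → Vec d)
    (σ : Vec d → Measure (Vec d) → A → Matrix (Fin d) (Fin m) ℝ)
    (Lbx Lbμ Lσx Lσμ M : ℝ) : Prop where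
  measb : Measurable fun p : Vec d × Measure (Vec d) × A => b p.1 p.2.1 p.2.2
  meass : Measurable fun p : Vec d × Measure (Vec d) × A => σ p.1 p.2.1 p.2.2
  lipbx : ∀ x x' μ a, MemP2 μ → ‖b x μ a - b x' μ a‖ ≤ Lbx * ‖x - x'‖
  lipbμ : ∀ x μ μ' a, MemP2 μ → MemP2 μ' → ‖b x μ a - b x μ' a‖ ≤ Lbμ * W2 μ μ'
  lipσx : ∀ x x' μ a, MemP2 μ → matNorm (σ x μ a - σ x' μ a) ≤ Lσx * ‖x - x'‖
  lipσμ : ∀ x μ μ' a, MemP2 μ → MemP2 μ' → matNorm (σ x μ a - σ x μ' a) ≤ Lσμ * W2 μ μ'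
  growth : ∀ a, ‖b 0 (Measure.dirac 0) a‖ + matNorm (σ 0 (Measure.dirac 0) a) ≤ M
  contb : ∀ x μ, MemP2 μ → Continuous fun a => b x μ a
  contσ : ∀ x μ, MemP2 μ → Continuous fun a => σ x μ a

/-- The dissipativity assumption (Assumptions 3.1) with constant `η > 0`. -/
def Dissipative {Ω : Type*} {m0 : MeasurableSpace Ω} (P : Measure Ω) {d m : ℕ} {A : Type*}
    (b : Vec d → Measure (Vec d) → A → Vec d)
    (σ : Vec d → Measure (Vec d) → A → Matrix (Fin d) (Fin m) ℝ) (η : ℝ) : Prop :=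
  0 < η ∧ ∀ a : A, ∀ ξ ξ' : Ω → Vec d, MemLp ξ 2 P → MemLp ξ' 2 P →
    (∫ ω, (⟪b (ξ ω) (P.map ξ) a - b (ξ' ω) (P.map ξ') a, ξ ω - ξ' ω⟫_ℝ
        + (1 / 2) * matNorm (σ (ξ ω) (P.map ξ) a - σ (ξ' ω) (P.map ξ') a) ^ 2) ∂P)
      ≤ -η * ∫ ω, ‖ξ ω - ξ' ω‖ ^ 2 ∂P

/-- Standing assumptions on the running reward `f` (Assumptions 4.1). -/
structure RewardAssumptions {d : ℕ} {A : Type*} [MeasurableSpace A] [TopologicalSpace A]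
    (f : Vec d → Measure (Vec d) → A → ℝ) (Mf Lf : ℝ) : Prop where
  meas : Measurable fun p : Vec d × Measure (Vec d) × A => f p.1 p.2.1 p.2.2
  bound : ∀ x μ a, MemP2 μ → |f x μ a| ≤ Mf
  lip : ∀ x x' μ μ' a, MemP2 μ → MemP2 μ' →
    |f x μ a - f x' μ' a| ≤ Lf * (‖x - x'‖ + W2 μ μ')
  conta : ∀ x μ, MemP2 μ → Continuous fun a => f x μ a



/-! ### Auxiliary lemmas -/

section Aux

lemma matNorm_eq {d m : ℕ} (X : Matrix (Fin d) (Fin m) ℝ) :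
    matNorm X = ‖(WithLp.equiv 2 ((Fin d × Fin m) → ℝ)).symm (fun p => X p.1 p.2)‖ := by
  rw [EuclideanSpace.norm_eq, matNorm]
  congr 1
  rw [Fintype.sum_prod_type]
  simp [Real.norm_eq_abs, sq_abs]

lemma matNorm_nonneg {d m : ℕ} (X : Matrix (Fin d) (Fin m) ℝ) : 0 ≤ matNorm X :=
  Real.sqrt_nonneg _

lemma matNorm_sub_le {d m : ℕ} (X Y Z : Matrix (Fin d) (Fin m) ℝ) :
    matNorm (X - Z) ≤ matNorm (X - Y) + matNorm (Y - Z) := by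
  have h : ∀ U V : Matrix (Fin d) (Fin m) ℝ,
      (WithLp.equiv 2 ((Fin d × Fin m) → ℝ)).symm (fun p => (U - V) p.1 p.2)
        = (WithLp.equiv 2 ((Fin d × Fin m) → ℝ)).symm (fun p => U p.1 p.2)
          - (WithLp.equiv 2 ((Fin d × Fin m) → ℝ)).symm (fun p => V p.1 p.2) := fun U V => rfl
  rw [matNorm_eq, matNorm_eq, matNorm_eq, h, h, h]
  exact norm_sub_le_norm_sub_add_norm_sub _ _ _

lemma meas_nnnormsq {d : ℕ} : Measurable fun x : Vec d => (‖x‖₊ : ℝ≥0∞) ^ 2 :=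
  (measurable_coe_nnreal_ennreal.comp measurable_nnnorm).pow_const 2

lemma meas_nnnormsq_pair {d : ℕ} :
    Measurable fun p : Vec d × Vec d => (‖p.1 - p.2‖₊ : ℝ≥0∞) ^ 2 :=
  (measurable_coe_nnreal_ennreal.comp
    ((measurable_fst.sub measurable_snd).nnnorm)).pow_const 2

lemma memP2_dirac {d : ℕ} (x : Vec d) : MemP2 (Measure.dirac x) := by
  refine ⟨inferInstance, ?_⟩
  rw [secondMoment, lintegral_dirac' _ meas_nnnormsq]
  exact ENNReal.pow_lt_top ENNReal.coe_lt_top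

lemma W2_nonneg {d : ℕ} (μ ν : Measure (Vec d)) : 0 ≤ W2 μ ν := Real.sqrt_nonneg _

lemma w2sq_dirac {d : ℕ} (x : Vec d) :
    W2sq (Measure.dirac (0 : Vec d)) (Measure.dirac x) = (‖x‖₊ : ℝ≥0∞) ^ 2 := by
  apply le_antisymm
  · refine iInf_le_of_le (Measure.dirac ((0 : Vec d), x)) (iInf_le_of_le ?_ ?_)
    · exact ⟨Measure.map_dirac' measurable_fst _, Measure.map_dirac' measurable_snd _⟩
    · rw [lintegral_dirac' _ meas_nnnormsq_pair]; simp
  · refine le_iInf fun π => le_iInf fun hπ => ?_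
    have h1 : π {p : Vec d × Vec d | p.1 ≠ 0} = 0 := by
      have := Measure.map_apply (μ := π) measurable_fst
        (measurableSet_singleton (0 : Vec d)).compl
      rw [hπ.1] at this
      have h := this.symm; simp at h; exact h
    have h2 : π {p : Vec d × Vec d | p.2 ≠ x} = 0 := by
      have := Measure.map_apply (μ := π) measurable_snd
        (measurableSet_singleton x).compl
      rw [hπ.2] at this
      have h := this.symm; simp at h; exact h
    have hae : ∀ᵐ p ∂π, (‖p.1 - p.2‖₊ : ℝ≥0∞) ^ 2 = (‖x‖₊ : ℝ≥0∞) ^ 2 := by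
      filter_upwards [measure_eq_zero_iff_ae_notMem.mp h1, measure_eq_zero_iff_ae_notMem.mp h2]
        with p hp1 hp2
      simp only [Set.mem_setOf_eq, not_not] at hp1 hp2
      rw [hp1, hp2, zero_sub, nnnorm_neg]
    have huniv : π Set.univ = 1 := by
      have := Measure.map_apply (μ := π) measurable_fst MeasurableSet.univ
      rw [hπ.1] at this
      simpa using this.symm
    rw [lintegral_congr_ae hae, lintegral_const, huniv, mul_one]

lemma w2_dirac {d : ℕ} (x : Vec d) :
    W2 (Measure.dirac (0 : Vec d)) (Measure.dirac x) = ‖x‖ := by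
  rw [W2, w2sq_dirac]
  simp [ENNReal.toReal_pow, Real.sqrt_sq (norm_nonneg x)]

variable {Ω : Type*} {m0 : MeasurableSpace Ω} {P : Measure Ω} [IsProbabilityMeasure P] {d : ℕ}

omit [IsProbabilityMeasure P] in
lemma integrable_norm_sq {f : Ω → Vec d} (hf : MemLp f 2 P) :
    Integrable (fun ω => ‖f ω‖ ^ 2) P := by
  have := hf.integrable_norm_rpow (by norm_num) (by norm_num)
  have h2 : ((2 : ℝ≥0∞)).toReal = ((2 : ℕ) : ℝ) := by norm_num
  simpa [h2, Real.rpow_natCast] using this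

omit [IsProbabilityMeasure P] in
lemma lintegral_nnnorm_sq_eq {f : Ω → Vec d} (hf : MemLp f 2 P) :
    ∫⁻ ω, (‖f ω‖₊ : ℝ≥0∞) ^ 2 ∂P = ENNReal.ofReal (∫ ω, ‖f ω‖ ^ 2 ∂P) := by
  rw [ofReal_integral_eq_lintegral_ofReal (integrable_norm_sq hf)
    (Filter.Eventually.of_forall fun ω => sq_nonneg _)]
  refine lintegral_congr fun ω => ?_
  rw [ENNReal.ofReal_pow (norm_nonneg _), ofReal_norm, enorm_eq_nnnorm]

lemma memP2_law {f : Ω → Vec d} (hf : MemLp f 2 P) : MemP2 (law P f) := by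
  have hfm := hf.aestronglyMeasurable.aemeasurable
  refine ⟨Measure.isProbabilityMeasure_map hfm, ?_⟩
  rw [law, secondMoment, lintegral_map' meas_nnnormsq.aemeasurable hfm,
    lintegral_nnnorm_sq_eq hf]
  exact ENNReal.ofReal_lt_top

omit [IsProbabilityMeasure P] in
lemma w2sq_law_le {f g : Ω → Vec d} (hf : MemLp f 2 P) (hg : MemLp g 2 P) :
    W2sq (law P f) (law P g) ≤ ENNReal.ofReal (∫ ω, ‖f ω - g ω‖ ^ 2 ∂P) := by
  have hfm := hf.aestronglyMeasurable.aemeasurable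
  have hgm := hg.aestronglyMeasurable.aemeasurable
  have hpair : AEMeasurable (fun ω => (f ω, g ω)) P := hfm.prodMk hgm
  have hcoup : IsCoupling (P.map fun ω => (f ω, g ω)) (law P f) (law P g) :=
    ⟨AEMeasurable.map_map_of_aemeasurable measurable_fst.aemeasurable hpair,
     AEMeasurable.map_map_of_aemeasurable measurable_snd.aemeasurable hpair⟩
  calc W2sq (law P f) (law P g)
      ≤ ∫⁻ p, (‖p.1 - p.2‖₊ : ℝ≥0∞) ^ 2 ∂(P.map fun ω => (f ω, g ω)) :=
        iInf_le_of_le _ (iInf_le_of_le hcoup le_rfl)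
    _ = ∫⁻ ω, (‖f ω - g ω‖₊ : ℝ≥0∞) ^ 2 ∂P :=
        lintegral_map' meas_nnnormsq_pair.aemeasurable hpair
    _ = ENNReal.ofReal (∫ ω, ‖f ω - g ω‖ ^ 2 ∂P) := lintegral_nnnorm_sq_eq (hf.sub hg)

omit [IsProbabilityMeasure P] in
lemma w2_law_sq_le {f g : Ω → Vec d} (hf : MemLp f 2 P) (hg : MemLp g 2 P) :
    (W2 (law P f) (law P g)) ^ 2 ≤ ∫ ω, ‖f ω - g ω‖ ^ 2 ∂P := by
  rw [W2, Real.sq_sqrt ENNReal.toReal_nonneg]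
  exact ENNReal.toReal_le_of_le_ofReal
    (integral_nonneg fun ω => sq_nonneg _) (w2sq_law_le hf hg)

end Aux

set_option maxHeartbeats 2000000 in
theorem sufficient_condition_dissipativity
    {Ω : Type*} {m0 : MeasurableSpace Ω} (P : Measure Ω) [IsProbabilityMeasure P]
    {d m : ℕ} {A : Type*} [MeasurableSpace A] [TopologicalSpace A] [PolishSpace A]
    [BorelSpace A]
    (b : Vec d → Measure (Vec d) → A → Vec d)
    (σ : Vec d → Measure (Vec d) → A → Matrix (Fin d) (Fin m) ℝ)
    (Lbx Lbμ Lσx Lσμ M : ℝ) (hcoef : StandingCoeffs b σ Lbx Lbμ Lσx Lσμ M)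
    (γ η : ℝ)
    (hpoint : ∀ (x x' : Vec d) (μ : Measure (Vec d)) (a : A), MemP2 μ →
      ⟪b x μ a - b x' μ a, x - x'⟫_ℝ + (1 / 2) * matNorm (σ x μ a - σ x' μ a) ^ 2
        ≤ -γ * ‖x - x'‖ ^ 2)
    (hη : η = γ - (Lbμ + Lσx * Lσμ + (1 / 2) * Lσμ ^ 2)) (hηpos : 0 < η)
    :
    ∀ a : A, ∀ ξ ξ' : Ω → Vec d, MemLp ξ 2 P → MemLp ξ' 2 P →
      (∫ ω, (⟪b (ξ ω) (law P ξ) a - b (ξ' ω) (law P ξ') a, ξ ω - ξ' ω⟫_ℝ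
          + (1 / 2) * matNorm (σ (ξ ω) (law P ξ) a - σ (ξ' ω) (law P ξ') a) ^ 2) ∂P)
        ≤ -η * ∫ ω, ‖ξ ω - ξ' ω‖ ^ 2 ∂P := by
  intro a ξ ξ' hξ hξ'
  rcases Nat.eq_zero_or_pos d with hd | hd
  · -- trivial case `d = 0`
    subst hd
    have hsing : ∀ x y : Vec 0, x = y := fun x y => by ext i; exact i.elim0
    have hz : ∀ ω : Ω, ξ ω - ξ' ω = (0 : Vec 0) := fun ω => hsing _ _
    simp only [hz]
    simp [matNorm]
  -- main case `0 < d`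
  set μ := law P ξ with hμdef
  set μ' := law P ξ' with hμ'def
  have hμ : MemP2 μ := memP2_law hξ
  have hμ' : MemP2 μ' := memP2_law hξ'
  set W := W2 μ μ' with hWdef
  have hW0 : 0 ≤ W := W2_nonneg _ _
  set I2 := ∫ ω, ‖ξ ω - ξ' ω‖ ^ 2 ∂P with hI2def
  have hI2 : 0 ≤ I2 := integral_nonneg fun ω => sq_nonneg _
  have hWsq : W ^ 2 ≤ I2 := w2_law_sq_le hξ hξ'
  -- sign of the Lipschitz constants
  set x₀ : Vec d := EuclideanSpace.single (⟨0, hd⟩ : Fin d) (1 : ℝ) with hx₀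
  have hx₀norm : ‖x₀‖ = 1 := by
    rw [hx₀, EuclideanSpace.norm_single]; norm_num
  have hWdirac : W2 (Measure.dirac (0 : Vec d)) (Measure.dirac x₀) = 1 := by
    rw [w2_dirac, hx₀norm]
  have hLbμ : 0 ≤ Lbμ := by
    have h := hcoef.lipbμ 0 (Measure.dirac 0) (Measure.dirac x₀) a
      (memP2_dirac _) (memP2_dirac _)
    rw [hWdirac, mul_one] at h
    exact le_trans (norm_nonneg _) h
  have hLσμ : 0 ≤ Lσμ := by
    have h := hcoef.lipσμ 0 (Measure.dirac 0) (Measure.dirac x₀) a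
      (memP2_dirac _) (memP2_dirac _)
    rw [hWdirac, mul_one] at h
    exact le_trans (matNorm_nonneg _) h
  have hLσx : 0 ≤ Lσx := by
    have h := hcoef.lipσx x₀ 0 (Measure.dirac 0) a (memP2_dirac _)
    rw [sub_zero, hx₀norm, mul_one] at h
    exact le_trans (matNorm_nonneg _) h
  set K := Lbμ + Lσx * Lσμ with hKdef
  have hK : 0 ≤ K := add_nonneg hLbμ (mul_nonneg hLσx hLσμ)
  -- integrability ingredients
  have hΔ : MemLp (fun ω => ξ ω - ξ' ω) 2 P := hξ.sub hξ'
  have intΔsq : Integrable (fun ω => ‖ξ ω - ξ' ω‖ ^ 2) P := integrable_norm_sq hΔ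
  have intΔ : Integrable (fun ω => ‖ξ ω - ξ' ω‖) P := by
    have h1 : MemLp (fun ω => ξ ω - ξ' ω) 1 P :=
      hΔ.mono_exponent (by norm_num)
    exact (memLp_one_iff_integrable.mp h1).norm
  -- pointwise estimate
  have key : ∀ ω : Ω,
      ⟪b (ξ ω) μ a - b (ξ' ω) μ' a, ξ ω - ξ' ω⟫_ℝ
          + (1 / 2) * matNorm (σ (ξ ω) μ a - σ (ξ' ω) μ' a) ^ 2
        ≤ (-γ + K / 2) * ‖ξ ω - ξ' ω‖ ^ 2 + (K / 2 + (1 / 2) * Lσμ ^ 2) * W ^ 2 := by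
    intro ω
    have hbx := hpoint (ξ ω) (ξ' ω) μ a hμ
    have hbμ' : ‖b (ξ' ω) μ a - b (ξ' ω) μ' a‖ ≤ Lbμ * W :=
      hcoef.lipbμ (ξ' ω) μ μ' a hμ hμ'
    have hσx : matNorm (σ (ξ ω) μ a - σ (ξ' ω) μ a) ≤ Lσx * ‖ξ ω - ξ' ω‖ :=
      hcoef.lipσx (ξ ω) (ξ' ω) μ a hμ
    have hσμ : matNorm (σ (ξ' ω) μ a - σ (ξ' ω) μ' a) ≤ Lσμ * W :=
      hcoef.lipσμ (ξ' ω) μ μ' a hμ hμ'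
    have htri := matNorm_sub_le (σ (ξ ω) μ a) (σ (ξ' ω) μ a) (σ (ξ' ω) μ' a)
    have hu0 := matNorm_nonneg (σ (ξ ω) μ a - σ (ξ' ω) μ' a)
    have ht0 := matNorm_nonneg (σ (ξ ω) μ a - σ (ξ' ω) μ a)
    have hs0 := matNorm_nonneg (σ (ξ' ω) μ a - σ (ξ' ω) μ' a)
    have hn0 : (0 : ℝ) ≤ ‖ξ ω - ξ' ω‖ := norm_nonneg _
    have hinner : ⟪b (ξ ω) μ a - b (ξ' ω) μ' a, ξ ω - ξ' ω⟫_ℝ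
        = ⟪b (ξ ω) μ a - b (ξ' ω) μ a, ξ ω - ξ' ω⟫_ℝ
          + ⟪b (ξ' ω) μ a - b (ξ' ω) μ' a, ξ ω - ξ' ω⟫_ℝ := by
      rw [← inner_add_left, sub_add_sub_cancel]
    have hcs : ⟪b (ξ' ω) μ a - b (ξ' ω) μ' a, ξ ω - ξ' ω⟫_ℝ
        ≤ ‖b (ξ' ω) μ a - b (ξ' ω) μ' a‖ * ‖ξ ω - ξ' ω‖ := real_inner_le_norm _ _
    have hinner2 : ⟪b (ξ' ω) μ a - b (ξ' ω) μ' a, ξ ω - ξ' ω⟫_ℝ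
        ≤ (Lbμ * W) * ‖ξ ω - ξ' ω‖ :=
      hcs.trans (mul_le_mul_of_nonneg_right hbμ' hn0)
    have husq : matNorm (σ (ξ ω) μ a - σ (ξ' ω) μ' a) ^ 2
        ≤ (matNorm (σ (ξ ω) μ a - σ (ξ' ω) μ a)
            + matNorm (σ (ξ' ω) μ a - σ (ξ' ω) μ' a)) ^ 2 :=
      pow_le_pow_left₀ hu0 htri 2
    have hts : matNorm (σ (ξ ω) μ a - σ (ξ' ω) μ a)
          * matNorm (σ (ξ' ω) μ a - σ (ξ' ω) μ' a)
        ≤ (Lσx * ‖ξ ω - ξ' ω‖) * (Lσμ * W) :=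
      mul_le_mul hσx hσμ hs0 (mul_nonneg hLσx hn0)
    have hssq : matNorm (σ (ξ' ω) μ a - σ (ξ' ω) μ' a) ^ 2 ≤ (Lσμ * W) ^ 2 :=
      pow_le_pow_left₀ hs0 hσμ 2
    have hyoung : W * ‖ξ ω - ξ' ω‖ ≤ (1 / 2) * W ^ 2 + (1 / 2) * ‖ξ ω - ξ' ω‖ ^ 2 := by
      nlinarith [sq_nonneg (W - ‖ξ ω - ξ' ω‖)]
    have hKy : K * (W * ‖ξ ω - ξ' ω‖)
        ≤ K * ((1 / 2) * W ^ 2 + (1 / 2) * ‖ξ ω - ξ' ω‖ ^ 2) :=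
      mul_le_mul_of_nonneg_left hyoung hK
    rw [hinner]
    nlinarith [husq, hts, hssq, hinner2, hbx, hKy, hLbμ, hW0, hn0,
      mul_le_mul_of_nonneg_left hyoung hLbμ,
      mul_le_mul_of_nonneg_left hyoung (mul_nonneg hLσx hLσμ)]
  -- measurability of the integrand
  have hξm : AEMeasurable ξ P := hξ.aestronglyMeasurable.aemeasurable
  have hξm' : AEMeasurable ξ' P := hξ'.aestronglyMeasurable.aemeasurable
  have hΔm : AEMeasurable (fun ω => ξ ω - ξ' ω) P := hξm.sub hξm'
  have hbm : Measurable fun x : Vec d => b x μ a := by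
    have hp : Measurable fun x : Vec d => (x, (μ, a)) :=
      measurable_id.prodMk measurable_const
    exact hcoef.measb.comp hp
  have hbm' : Measurable fun x : Vec d => b x μ' a := by
    have hp : Measurable fun x : Vec d => (x, (μ', a)) :=
      measurable_id.prodMk measurable_const
    exact hcoef.measb.comp hp
  have hsm : Measurable fun x : Vec d => σ x μ a := by
    have hp : Measurable fun x : Vec d => (x, (μ, a)) :=
      measurable_id.prodMk measurable_const
    exact hcoef.meass.comp hp
  have hsm' : Measurable fun x : Vec d => σ x μ' a := by
    have hp : Measurable fun x : Vec d => (x, (μ', a)) :=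
      measurable_id.prodMk measurable_const
    exact hcoef.meass.comp hp
  have hB : AEMeasurable (fun ω => b (ξ ω) μ a - b (ξ' ω) μ' a) P :=
    (hbm.comp_aemeasurable hξm).sub (hbm'.comp_aemeasurable hξm')
  have hinnerM : AEMeasurable
      (fun ω => ⟪b (ξ ω) μ a - b (ξ' ω) μ' a, ξ ω - ξ' ω⟫_ℝ) P :=
    (continuous_inner : Continuous fun p : Vec d × Vec d => ⟪p.1, p.2⟫_ℝ).measurable.comp_aemeasurable
      (hB.prodMk hΔm)
  have hmatM : AEMeasurable
      (fun ω => matNorm (σ (ξ ω) μ a - σ (ξ' ω) μ' a)) P := by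
    unfold matNorm
    apply Real.continuous_sqrt.measurable.comp_aemeasurable
    apply Finset.aemeasurable_fun_sum; intro i _
    apply Finset.aemeasurable_fun_sum; intro j _
    simp only [Matrix.sub_apply]
    have h1 : Measurable fun x : Vec d => σ x μ a i j :=
      (measurable_pi_apply j).comp ((measurable_pi_apply i).comp hsm)
    have h2 : Measurable fun x : Vec d => σ x μ' a i j :=
      (measurable_pi_apply j).comp ((measurable_pi_apply i).comp hsm')
    exact ((h1.comp_aemeasurable hξm).sub (h2.comp_aemeasurable hξm')).pow_const 2
  have hfm : AEStronglyMeasurable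
      (fun ω => ⟪b (ξ ω) μ a - b (ξ' ω) μ' a, ξ ω - ξ' ω⟫_ℝ
        + (1 / 2) * matNorm (σ (ξ ω) μ a - σ (ξ' ω) μ' a) ^ 2) P :=
    (hinnerM.add (aemeasurable_const.mul (hmatM.pow_const 2))).aestronglyMeasurable
  -- dominating function
  set Φ : Ω → ℝ := fun ω =>
    (Lbx + (1 / 2) * Lσx ^ 2) * ‖ξ ω - ξ' ω‖ ^ 2
      + ((Lbμ * W + Lσx * Lσμ * W) * ‖ξ ω - ξ' ω‖ + (1 / 2) * (Lσμ * W) ^ 2) with hΦdef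
  have intΦ : Integrable Φ P :=
    (intΔsq.const_mul _).add ((intΔ.const_mul _).add (integrable_const _))
  have hbound : ∀ ω : Ω,
      ‖⟪b (ξ ω) μ a - b (ξ' ω) μ' a, ξ ω - ξ' ω⟫_ℝ
        + (1 / 2) * matNorm (σ (ξ ω) μ a - σ (ξ' ω) μ' a) ^ 2‖ ≤ Φ ω := by
    intro ω
    have hbμ' : ‖b (ξ' ω) μ a - b (ξ' ω) μ' a‖ ≤ Lbμ * W :=
      hcoef.lipbμ (ξ' ω) μ μ' a hμ hμ'
    have hbxl : ‖b (ξ ω) μ a - b (ξ' ω) μ a‖ ≤ Lbx * ‖ξ ω - ξ' ω‖ :=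
      hcoef.lipbx (ξ ω) (ξ' ω) μ a hμ
    have hbtri : ‖b (ξ ω) μ a - b (ξ' ω) μ' a‖
        ≤ ‖b (ξ ω) μ a - b (ξ' ω) μ a‖ + ‖b (ξ' ω) μ a - b (ξ' ω) μ' a‖ :=
      norm_sub_le_norm_sub_add_norm_sub _ _ _
    have hσx : matNorm (σ (ξ ω) μ a - σ (ξ' ω) μ a) ≤ Lσx * ‖ξ ω - ξ' ω‖ :=
      hcoef.lipσx (ξ ω) (ξ' ω) μ a hμ
    have hσμ : matNorm (σ (ξ' ω) μ a - σ (ξ' ω) μ' a) ≤ Lσμ * W :=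
      hcoef.lipσμ (ξ' ω) μ μ' a hμ hμ'
    have htri := matNorm_sub_le (σ (ξ ω) μ a) (σ (ξ' ω) μ a) (σ (ξ' ω) μ' a)
    have hu0 := matNorm_nonneg (σ (ξ ω) μ a - σ (ξ' ω) μ' a)
    have hn0 : (0 : ℝ) ≤ ‖ξ ω - ξ' ω‖ := norm_nonneg _
    have husq : matNorm (σ (ξ ω) μ a - σ (ξ' ω) μ' a) ^ 2
        ≤ (Lσx * ‖ξ ω - ξ' ω‖ + Lσμ * W) ^ 2 :=
      pow_le_pow_left₀ hu0 (htri.trans (add_le_add hσx hσμ)) 2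
    have habs : |⟪b (ξ ω) μ a - b (ξ' ω) μ' a, ξ ω - ξ' ω⟫_ℝ|
        ≤ ‖b (ξ ω) μ a - b (ξ' ω) μ' a‖ * ‖ξ ω - ξ' ω‖ := abs_real_inner_le_norm _ _
    have hbn : ‖b (ξ ω) μ a - b (ξ' ω) μ' a‖ * ‖ξ ω - ξ' ω‖
        ≤ (Lbx * ‖ξ ω - ξ' ω‖ + Lbμ * W) * ‖ξ ω - ξ' ω‖ :=
      mul_le_mul_of_nonneg_right (hbtri.trans (add_le_add hbxl hbμ')) hn0
    rw [Real.norm_eq_abs, hΦdef]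
    calc |⟪b (ξ ω) μ a - b (ξ' ω) μ' a, ξ ω - ξ' ω⟫_ℝ
          + (1 / 2) * matNorm (σ (ξ ω) μ a - σ (ξ' ω) μ' a) ^ 2|
        ≤ |⟪b (ξ ω) μ a - b (ξ' ω) μ' a, ξ ω - ξ' ω⟫_ℝ|
          + |(1 / 2) * matNorm (σ (ξ ω) μ a - σ (ξ' ω) μ' a) ^ 2| := abs_add_le _ _
      _ ≤ (Lbx * ‖ξ ω - ξ' ω‖ + Lbμ * W) * ‖ξ ω - ξ' ω‖
          + (1 / 2) * (Lσx * ‖ξ ω - ξ' ω‖ + Lσμ * W) ^ 2 := by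
          refine add_le_add (habs.trans hbn) ?_
          rw [abs_of_nonneg (by positivity)]
          linarith [husq]
      _ = (Lbx + (1 / 2) * Lσx ^ 2) * ‖ξ ω - ξ' ω‖ ^ 2
          + ((Lbμ * W + Lσx * Lσμ * W) * ‖ξ ω - ξ' ω‖ + (1 / 2) * (Lσμ * W) ^ 2) := by
          ring
  have intf : Integrable
      (fun ω => ⟪b (ξ ω) μ a - b (ξ' ω) μ' a, ξ ω - ξ' ω⟫_ℝ
        + (1 / 2) * matNorm (σ (ξ ω) μ a - σ (ξ' ω) μ' a) ^ 2) P :=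
    intΦ.mono' hfm (Filter.Eventually.of_forall hbound)
  have intg : Integrable
      (fun ω => (-γ + K / 2) * ‖ξ ω - ξ' ω‖ ^ 2 + (K / 2 + (1 / 2) * Lσμ ^ 2) * W ^ 2) P :=
    (intΔsq.const_mul _).add (integrable_const _)
  calc (∫ ω, (⟪b (ξ ω) μ a - b (ξ' ω) μ' a, ξ ω - ξ' ω⟫_ℝ
          + (1 / 2) * matNorm (σ (ξ ω) μ a - σ (ξ' ω) μ' a) ^ 2) ∂P)
      ≤ ∫ ω, ((-γ + K / 2) * ‖ξ ω - ξ' ω‖ ^ 2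
          + (K / 2 + (1 / 2) * Lσμ ^ 2) * W ^ 2) ∂P := integral_mono intf intg key
    _ = (-γ + K / 2) * I2 + (K / 2 + (1 / 2) * Lσμ ^ 2) * W ^ 2 := by
        rw [integral_add (intΔsq.const_mul _) (integrable_const _),
          integral_const_mul, integral_const]
        simp [hI2def]
    _ ≤ -η * I2 := by
        have hc : 0 ≤ K / 2 + (1 / 2) * Lσμ ^ 2 := by positivity
        nlinarith [mul_nonneg hc (sub_nonneg.mpr hWsq)]


end
end

section
/- Vanishing discount construction of the pair (λ, φ): under the standing assumptions on b, σ, f and the dissipativity assumption, there exist a sequence β_n → 0, a real number λ and a function φ: P₂(ℝ^d) → ℝ such that β_n v^{β_n}(δ₀) → λ, v^{β_n}(μ) − v^{β_n}(δ₀) → φ(μ) as n → ∞ uniformly for μ in every compact subset of P₂(ℝ^d), and φ satisfies |φ(μ)| ≤ L · W₂(μ, δ₀) and |φ(μ) − φ(ν)| ≤ L · W₂(μ, ν) for all μ, ν ∈ P₂(ℝ^d), where L is the uniform Lipschitz constant of the family (v^β)_{β>0}. -/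
open MeasureTheory ProbabilityTheory Filter Set
open scoped ENNReal NNReal Topology InnerProductSpace

noncomputable section

/-- Discounted infinite-horizon expected reward
`J_β(ξ,α) = E[∫₀^∞ e^{-βt} f(X_t, P_{X_t}, α_t) dt]`, written for the solution process `X`. -/
def discJ {Ω : Type*} {m0 : MeasurableSpace Ω} (P : Measure Ω) {d : ℕ} {A : Type*}
    (f : Vec d → Measure (Vec d) → A → ℝ) (β : ℝ)
    (X : ℝ → Ω → Vec d) (α : ℝ → Ω → A) : ℝ :=
  ∫ ω, (∫ t in Ioi (0 : ℝ), Real.exp (-β * t) * f (X t ω) (P.map (X t)) (α t ω)) ∂P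

/-- Finite-horizon expected running reward
`E[∫_t^T f(X_s, P_{X_s}, α_s) ds]`, written for the solution process `X`. -/
def finJ {Ω : Type*} {m0 : MeasurableSpace Ω} (P : Measure Ω) {d : ℕ} {A : Type*}
    (f : Vec d → Measure (Vec d) → A → ℝ) (t T : ℝ)
    (X : ℝ → Ω → Vec d) (α : ℝ → Ω → A) : ℝ :=
  ∫ ω, (∫ s in t..T, f (X s ω) (P.map (X s)) (α s ω)) ∂P

/-- Ergodic (long term average) reward
`J_∞(ξ,α) = limsup_{T→∞} E[(1/T) ∫₀^T f(X_t, P_{X_t}, α_t) dt]`. -/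
def ergJ {Ω : Type*} {m0 : MeasurableSpace Ω} (P : Measure Ω) {d : ℕ} {A : Type*}
    (f : Vec d → Measure (Vec d) → A → ℝ)
    (X : ℝ → Ω → Vec d) (α : ℝ → Ω → A) : ℝ :=
  Filter.limsup (fun T : ℝ => (1 / T) * finJ P f 0 T X α) Filter.atTop


section VDHelpers

open scoped BigOperators

namespace VD

variable {d : ℕ}

lemma norm_sq_eq (v : Vec d) : ‖v‖ ^ 2 = ∑ i, (v i) ^ 2 := by
  rw [EuclideanSpace.norm_eq, Real.sq_sqrt (by positivity)]
  simp [Real.norm_eq_abs, sq_abs]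

lemma coord_abs_le_norm (v : Vec d) (i : Fin d) : |v i| ≤ ‖v‖ := by
  have h1 : (v i) ^ 2 ≤ ‖v‖ ^ 2 := by
    rw [norm_sq_eq]
    exact Finset.single_le_sum (fun j _ => sq_nonneg (v j)) (Finset.mem_univ i)
  calc |v i| = Real.sqrt ((v i) ^ 2) := (Real.sqrt_sq_eq_abs _).symm
    _ ≤ Real.sqrt (‖v‖ ^ 2) := Real.sqrt_le_sqrt h1
    _ = ‖v‖ := Real.sqrt_sq (norm_nonneg v)

lemma ennnormsq (v : Vec d) : (‖v‖₊ : ℝ≥0∞) ^ 2 = ENNReal.ofReal (‖v‖ ^ 2) := by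
  rw [← enorm_eq_nnnorm, ← ofReal_norm, ← ENNReal.ofReal_pow (norm_nonneg v)]

lemma ennnormsq_le {v : Vec d} {c : ℝ} (h : ‖v‖ ^ 2 ≤ c) :
    (‖v‖₊ : ℝ≥0∞) ^ 2 ≤ ENNReal.ofReal c := by
  rw [ennnormsq]; exact ENNReal.ofReal_le_ofReal h

lemma sq_add_le4 (b c : ℝ≥0∞) : (b + c) ^ 2 ≤ 4 * b ^ 2 + 4 * c ^ 2 := by
  have h1 : b + c ≤ 2 * (b ⊔ c) := by
    rcases le_total b c with h | h
    · calc b + c ≤ c + c := by gcongr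
        _ = 2 * c := (two_mul c).symm
        _ ≤ 2 * (b ⊔ c) := by gcongr; exact le_max_right _ _
    · calc b + c ≤ b + b := by gcongr
        _ = 2 * b := (two_mul b).symm
        _ ≤ 2 * (b ⊔ c) := by gcongr; exact le_max_left _ _
  calc (b + c) ^ 2 ≤ (2 * (b ⊔ c)) ^ 2 := by gcongr
    _ = 4 * (b ⊔ c) ^ 2 := by ring
    _ ≤ 4 * b ^ 2 + 4 * c ^ 2 := by
        rcases le_total b c with h | h
        · rw [max_eq_right h]; exact le_add_self
        · rw [max_eq_left h]; exact le_self_add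

lemma sq_le4 {a b c : ℝ≥0∞} (h : a ≤ b + c) : a ^ 2 ≤ 4 * b ^ 2 + 4 * c ^ 2 :=
  le_trans (by gcongr) (sq_add_le4 b c)

lemma enn_triangle (x y : Vec d) :
    (‖x‖₊ : ℝ≥0∞) ≤ (‖x - y‖₊ : ℝ≥0∞) + (‖y‖₊ : ℝ≥0∞) := by
  have h : ‖x‖ ≤ ‖x - y‖ + ‖y‖ := by
    calc ‖x‖ = ‖(x - y) + y‖ := by rw [sub_add_cancel]
      _ ≤ _ := norm_add_le _ _
  rw [← enorm_eq_nnnorm, ← ofReal_norm, ← enorm_eq_nnnorm, ← ofReal_norm, ← enorm_eq_nnnorm,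
    ← ofReal_norm,
    ← ENNReal.ofReal_add (norm_nonneg _) (norm_nonneg _)]
  exact ENNReal.ofReal_le_ofReal h

lemma enn_triangle' (x y : Vec d) :
    (‖y‖₊ : ℝ≥0∞) ≤ (‖x - y‖₊ : ℝ≥0∞) + (‖x‖₊ : ℝ≥0∞) := by
  have h : ‖y‖ ≤ ‖x - y‖ + ‖x‖ := by
    have h0 : ‖y‖ = ‖(x - y) - x‖ := by rw [sub_sub_cancel_left, norm_neg]
    rw [h0]
    exact norm_sub_le _ _
  rw [← enorm_eq_nnnorm, ← ofReal_norm, ← enorm_eq_nnnorm, ← ofReal_norm, ← enorm_eq_nnnorm,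
    ← ofReal_norm,
    ← ENNReal.ofReal_add (norm_nonneg _) (norm_nonneg _)]
  exact ENNReal.ofReal_le_ofReal h

lemma memP2_dirac0 : MemP2 (Measure.dirac (0 : Vec d)) := by
  refine ⟨inferInstance, ?_⟩
  have : secondMoment (Measure.dirac (0 : Vec d)) = (‖(0 : Vec d)‖₊ : ℝ≥0∞) ^ 2 := by
    rw [secondMoment]
    exact lintegral_dirac 0 (fun x : Vec d => (‖x‖₊ : ℝ≥0∞) ^ 2)
  rw [this]
  simp

lemma measurable_coord (i : Fin d) : Measurable fun x : Vec d => x i :=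
  (EuclideanSpace.proj (𝕜 := ℝ) i).continuous.measurable

noncomputable def eQ (q : Fin d → ℚ) : Vec d := WithLp.toLp 2 (fun i => (q i : ℝ))

lemma eQ_zero : eQ (0 : Fin d → ℚ) = 0 := by
  ext i; simp [eQ]

noncomputable def Fmk (t : Finset ((Fin d → ℚ) × ℚ)) : Measure (Vec d) :=
  (∑ p ∈ t, ENNReal.ofReal (p.2 : ℝ) • Measure.dirac (eQ p.1))
    + (1 - ∑ p ∈ t, ENNReal.ofReal (p.2 : ℝ)) • Measure.dirac (0 : Vec d)

def BoxS (d R : ℕ) : Set (Vec d) := {x | ∀ i, |x i| < (R : ℝ)}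

noncomputable def gridQ (d N : ℕ) (x : Vec d) : Fin d → ℚ :=
  fun i => (⌊x i * (N : ℝ)⌋ : ℚ) / (N : ℚ)

def CellS (d R N : ℕ) (h : Fin d → ℚ) : Set (Vec d) :=
  (BoxS d R ∩ gridQ d N ⁻¹' {h}) ∪ {x | h = 0 ∧ x ∉ BoxS d R}

noncomputable def SGrid (d R N : ℕ) : Finset (Fin d → ℚ) :=
  (Fintype.piFinset fun _ : Fin d => Finset.Icc (-(R * N : ℤ)) (R * N)).image
      (fun z i => (z i : ℚ) / (N : ℚ)) ∪ {0}

lemma measurableSet_BoxS (R : ℕ) : MeasurableSet (BoxS d R) := by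
  have h : BoxS d R = ⋂ i, (fun x : Vec d => x i) ⁻¹' (Set.Ioo (-(R : ℝ)) R) := by
    ext x; simp [BoxS, abs_lt]
  rw [h]
  exact MeasurableSet.iInter fun i => (measurable_coord i) measurableSet_Ioo

lemma measurable_gridQ (N : ℕ) : Measurable (gridQ d N) := by
  apply measurable_pi_lambda
  intro i
  have hz : Measurable fun z : ℤ => ((z : ℚ) / (N : ℚ)) := measurable_from_top
  exact hz.comp (((measurable_coord i).mul_const _).floor)

lemma measurableSet_CellS (R N : ℕ) (h : Fin d → ℚ) : MeasurableSet (CellS d R N h) := by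
  apply MeasurableSet.union
  · exact (measurableSet_BoxS R).inter ((measurable_gridQ N) (measurableSet_singleton h))
  · rcases eq_or_ne h 0 with h0 | h0
    · have he : {x : Vec d | h = 0 ∧ x ∉ BoxS d R} = (BoxS d R)ᶜ := by ext x; simp [h0]
      rw [he]; exact (measurableSet_BoxS R).compl
    · have he : {x : Vec d | h = 0 ∧ x ∉ BoxS d R} = ∅ := by ext x; simp [h0]
      rw [he]; exact MeasurableSet.empty

lemma CellS_disjoint {R N : ℕ} {h h' : Fin d → ℚ} (hne : h ≠ h') :
    Disjoint (CellS d R N h) (CellS d R N h') := by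
  rw [Set.disjoint_left]
  rintro x (⟨hb, hg⟩ | ⟨h0, hb⟩) hx'
  · rcases hx' with ⟨hb', hg'⟩ | ⟨h0', hb'⟩
    · rw [Set.mem_preimage, Set.mem_singleton_iff] at hg hg'
      exact hne (hg ▸ hg' ▸ rfl)
    · exact hb' hb
  · rcases hx' with ⟨hb', hg'⟩ | ⟨h0', hb'⟩
    · exact hb hb'
    · exact hne (h0.trans h0'.symm)

lemma CellS_cover {R N : ℕ} (hN : 1 ≤ N) (x : Vec d) :
    ∃ h ∈ SGrid d R N, x ∈ CellS d R N h := by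
  by_cases hx : x ∈ BoxS d R
  · refine ⟨gridQ d N x, ?_, Or.inl ⟨hx, rfl⟩⟩
    apply Finset.mem_union_left
    apply Finset.mem_image.mpr
    refine ⟨fun i => ⌊x i * (N : ℝ)⌋, ?_, rfl⟩
    rw [Fintype.mem_piFinset]
    intro i
    rw [Finset.mem_Icc]
    have hxi := hx i
    rw [abs_lt] at hxi
    have hN0 : (0 : ℝ) < N := by exact_mod_cast Nat.lt_of_lt_of_le Nat.zero_lt_one hN
    constructor
    · rw [Int.le_floor]
      push_cast
      nlinarith [hxi.1]
    · have h1 : (⌊x i * (N : ℝ)⌋ : ℝ) ≤ x i * N := Int.floor_le _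
      have h2 : x i * (N : ℝ) < (R : ℝ) * N := by nlinarith [hxi.2]
      have : (⌊x i * (N : ℝ)⌋ : ℝ) < ((R * N : ℤ) : ℝ) := by push_cast; linarith
      exact le_of_lt (by exact_mod_cast this)
  · refine ⟨0, Finset.mem_union_right _ (Finset.mem_singleton_self 0), Or.inr ⟨rfl, hx⟩⟩

lemma SGrid_norm {R N : ℕ} (hN : 1 ≤ N) {h : Fin d → ℚ} (hh : h ∈ SGrid d R N) :
    ‖eQ h‖ ^ 2 ≤ d * R ^ 2 := by
  rw [norm_sq_eq]
  have hN0 : (0 : ℝ) < N := by exact_mod_cast Nat.lt_of_lt_of_le Nat.zero_lt_one hN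
  have hco : ∀ i, (eQ h i) ^ 2 ≤ (R : ℝ) ^ 2 := by
    intro i
    rcases Finset.mem_union.mp hh with hh' | hh'
    · obtain ⟨z, hz, rfl⟩ := Finset.mem_image.mp hh'
      have hz' := (Fintype.mem_piFinset.mp hz) i
      rw [Finset.mem_Icc] at hz'
      have h1 : |(z i : ℝ)| ≤ (R : ℝ) * N := by
        rw [abs_le]
        constructor
        · exact_mod_cast hz'.1
        · exact_mod_cast hz'.2
      have heq : eQ (fun i => (z i : ℚ) / (N : ℚ)) i = (z i : ℝ) / (N : ℝ) := by
        simp [eQ]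
      rw [heq]
      rw [div_pow]
      rw [div_le_iff₀ (by positivity)]
      have h2 : (z i : ℝ) ^ 2 ≤ ((R : ℝ) * N) ^ 2 := by
        rw [← sq_abs]
        exact pow_le_pow_left₀ (abs_nonneg _) h1 2
      nlinarith
    · rw [Finset.mem_singleton] at hh'
      subst hh'
      have : eQ (0 : Fin d → ℚ) i = 0 := by simp [eQ]
      rw [this]
      simpa using sq_nonneg (R : ℝ)
  calc ∑ i, (eQ h i) ^ 2 ≤ ∑ _i : Fin d, (R : ℝ) ^ 2 := Finset.sum_le_sum fun i _ => hco i
    _ = d * R ^ 2 := by simp [Finset.sum_const, Finset.card_univ, nsmul_eq_mul]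

lemma Cell_dist {R N : ℕ} (hN : 1 ≤ N) {h : Fin d → ℚ} {x : Vec d}
    (hx : x ∈ BoxS d R ∩ gridQ d N ⁻¹' {h}) : ‖x - eQ h‖ ^ 2 ≤ d / N ^ 2 := by
  obtain ⟨hxb, hxg⟩ := hx
  rw [Set.mem_preimage, Set.mem_singleton_iff] at hxg
  subst hxg
  have hN0 : (0 : ℝ) < N := by exact_mod_cast Nat.lt_of_lt_of_le Nat.zero_lt_one hN
  rw [norm_sq_eq]
  have hco : ∀ i, ((x - eQ (gridQ d N x)) i) ^ 2 ≤ 1 / (N : ℝ) ^ 2 := by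
    intro i
    have hsub : (x - eQ (gridQ d N x)) i = x i - ((gridQ d N x i : ℚ) : ℝ) := by
      rw [PiLp.sub_apply]; rfl
    have hcast : ((gridQ d N x i : ℚ) : ℝ) = (⌊x i * (N : ℝ)⌋ : ℝ) / (N : ℝ) := by
      simp [gridQ]
    rw [hsub, hcast]
    have h1 : (⌊x i * (N : ℝ)⌋ : ℝ) ≤ x i * N := Int.floor_le _
    have h2 : x i * (N : ℝ) < ⌊x i * (N : ℝ)⌋ + 1 := Int.lt_floor_add_one _
    have h3 : 0 ≤ x i - (⌊x i * (N : ℝ)⌋ : ℝ) / N := by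
      rw [sub_nonneg, div_le_iff₀ hN0]; linarith
    have h4 : x i - (⌊x i * (N : ℝ)⌋ : ℝ) / N ≤ 1 / N := by
      rw [sub_le_iff_le_add, ← add_div, le_div_iff₀ hN0]; linarith
    have habs : |x i - (⌊x i * (N : ℝ)⌋ : ℝ) / N| ≤ 1 / N :=
      abs_le.mpr ⟨le_trans (neg_nonpos.mpr (by positivity)) h3, h4⟩
    calc (x i - (⌊x i * (N : ℝ)⌋ : ℝ) / N) ^ 2 = |x i - (⌊x i * (N : ℝ)⌋ : ℝ) / N| ^ 2 := (sq_abs _).symm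
      _ ≤ (1 / N) ^ 2 := pow_le_pow_left₀ (abs_nonneg _) habs 2
      _ = 1 / (N : ℝ) ^ 2 := by rw [div_pow, one_pow]
  calc ∑ i, ((x - eQ (gridQ d N x)) i) ^ 2 ≤ ∑ _i : Fin d, 1 / (N : ℝ) ^ 2 :=
        Finset.sum_le_sum fun i _ => hco i
    _ = d * (1 / (N : ℝ) ^ 2) := by simp [Finset.sum_const, Finset.card_univ, nsmul_eq_mul]
    _ = d / N ^ 2 := by ring

end VD

end VDHelpers

section VDHelpers2

namespace VD

variable {d : ℕ}

lemma exists_close_discrete (μ : Measure (Vec d)) (hμ : MemP2 μ) {ε : ℝ} (hε : 0 < ε) :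
    ∃ t : Finset ((Fin d → ℚ) × ℚ), MemP2 (Fmk t) ∧ W2 μ (Fmk t) < ε := by
  classical
  obtain ⟨hprob, hmom⟩ := hμ
  haveI := hprob
  have hmom' : (∫⁻ x, (‖x‖₊ : ℝ≥0∞) ^ 2 ∂μ) ≠ ⊤ := by
    rw [← secondMoment]; exact hmom.ne
  set e1 : ℝ := ε ^ 2 / 12 with he1def
  have he1 : 0 < e1 := by positivity
  -- tail estimate
  obtain ⟨R, hRtail⟩ : ∃ R : ℕ,
      (∫⁻ x in (BoxS d R)ᶜ, (‖x‖₊ : ℝ≥0∞) ^ 2 ∂μ) < ENNReal.ofReal e1 := by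
    have hA : ∀ n : ℕ, MeasurableSet {x : Vec d | (n : ℝ) ≤ ‖x‖} := fun n =>
      (isClosed_le continuous_const continuous_norm).measurableSet
    have hanti : Antitone fun n : ℕ => {x : Vec d | (n : ℝ) ≤ ‖x‖} := by
      intro a b hab x hx
      have h1 : (a : ℝ) ≤ (b : ℝ) := by exact_mod_cast hab
      exact le_trans h1 hx
    have hint : (⋂ n : ℕ, {x : Vec d | (n : ℝ) ≤ ‖x‖}) = ∅ := by
      ext x
      simp only [Set.mem_iInter, Set.mem_setOf_eq, Set.mem_empty_iff_false, iff_false,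
        not_forall, not_le]
      obtain ⟨n, hn⟩ := exists_nat_gt ‖x‖
      exact ⟨n, hn⟩
    have hm0 : Tendsto (fun n : ℕ => μ {x : Vec d | (n : ℝ) ≤ ‖x‖}) atTop (𝓝 0) := by
      have h := MeasureTheory.tendsto_measure_iInter_atTop (μ := μ)
        (fun n => (hA n).nullMeasurableSet) hanti ⟨0, measure_ne_top μ _⟩
      rwa [hint, measure_empty] at h
    have hto := MeasureTheory.tendsto_setLIntegral_zero hmom' hm0
    obtain ⟨R, hR⟩ := (hto.eventually_lt_const (ENNReal.ofReal_pos.mpr he1)).exists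
    refine ⟨R, lt_of_le_of_lt (lintegral_mono_set ?_) hR⟩
    intro x hx
    simp only [Set.mem_compl_iff, BoxS, Set.mem_setOf_eq, not_forall, not_lt] at hx
    obtain ⟨i, hi⟩ := hx
    exact le_trans hi (coord_abs_le_norm x i)
  -- grid fineness
  obtain ⟨N, hNgt⟩ := exists_nat_gt (max 1 ((d : ℝ) / e1))
  have hN1R : (1 : ℝ) ≤ N := le_of_lt (lt_of_le_of_lt (le_max_left _ _) hNgt)
  have hN1 : 1 ≤ N := by exact_mod_cast hN1R
  have hN0 : (0 : ℝ) < N := by linarith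
  have hdN : (d : ℝ) / (N : ℝ) ^ 2 ≤ e1 := by
    have h2 : (d : ℝ) / e1 < N := lt_of_le_of_lt (le_max_right _ _) hNgt
    rw [div_lt_iff₀ he1] at h2
    rw [div_le_iff₀ (by positivity)]
    nlinarith
  set S : Finset (Fin d → ℚ) := SGrid d R N with hSdef
  set C : (Fin d → ℚ) → Set (Vec d) := CellS d R N with hCdef
  have hCmeas : ∀ h, MeasurableSet (C h) := measurableSet_CellS R N
  have hCdisj : ∀ {h h' : Fin d → ℚ}, h ≠ h' → Disjoint (C h) (C h') :=
    fun hne => CellS_disjoint hne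
  have h0S : (0 : Fin d → ℚ) ∈ S := Finset.mem_union_right _ (Finset.mem_singleton_self 0)
  -- partition identity
  have hsum : ∀ {T : Set (Vec d)}, MeasurableSet T → ∑ h ∈ S, μ (T ∩ C h) = μ T := by
    intro T hT
    have hbi : (⋃ h ∈ S, T ∩ C h) = T := by
      apply Set.Subset.antisymm
      · simp only [Set.iUnion_subset_iff]
        intro h _
        exact Set.inter_subset_left
      · intro x hx
        obtain ⟨h, hhS, hxC⟩ := CellS_cover (R := R) hN1 x
        exact Set.mem_biUnion hhS ⟨hx, hxC⟩
    rw [← measure_biUnion_finset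
        (fun h _ h' _ hne => Disjoint.mono Set.inter_subset_right Set.inter_subset_right
          (hCdisj hne))
        (fun h _ => hT.inter (hCmeas h)), hbi]
  have hPfin : ∀ h, μ (C h) ≠ ⊤ := fun h => measure_ne_top μ _
  -- rational weights
  set δ2 : ℝ := e1 / (4 * d * R ^ 2 * (S.card) + 1) with hδ2def
  have hδ2 : 0 < δ2 := by positivity
  have hqex : ∀ h : Fin d → ℚ, ∃ q : ℚ, 0 ≤ (q : ℝ) ∧ (q : ℝ) ≤ (μ (C h)).toReal ∧
      (μ (C h)).toReal - (q : ℝ) ≤ δ2 := by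
    intro h
    rcases eq_or_lt_of_le (ENNReal.toReal_nonneg : 0 ≤ (μ (C h)).toReal) with hp | hp
    · exact ⟨0, by norm_num, by rw [← hp]; norm_num, by rw [← hp]; simpa using hδ2.le⟩
    · have hmax : max ((μ (C h)).toReal - δ2) 0 < (μ (C h)).toReal := max_lt (by linarith) hp
      obtain ⟨q, hq1, hq2⟩ := exists_rat_btwn hmax
      refine ⟨q, le_of_lt (lt_of_le_of_lt (le_max_right _ _) hq1), hq2.le, ?_⟩
      have := lt_of_le_of_lt (le_max_left _ _) hq1
      linarith
  choose qh hq0 hqle hqd using hqex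
  set Q : (Fin d → ℚ) → ℝ≥0∞ := fun h => ENNReal.ofReal (qh h) with hQdef
  have hPof : ∀ h, μ (C h) = ENNReal.ofReal ((μ (C h)).toReal) := fun h =>
    (ENNReal.ofReal_toReal (hPfin h)).symm
  have hQP : ∀ h, Q h ≤ μ (C h) := fun h => by
    rw [hPof h]; exact ENNReal.ofReal_le_ofReal (hqle h)
  have hQfin : ∀ h, Q h ≠ ⊤ := fun h => ENNReal.ofReal_ne_top
  have hPQ : ∀ h, μ (C h) - Q h ≤ ENNReal.ofReal δ2 := by
    intro h
    rw [hPof h, hQdef, ← ENNReal.ofReal_sub _ (hq0 h)]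
    exact ENNReal.ofReal_le_ofReal (hqd h)
  -- the coupling
  set mker : (Fin d → ℚ) → Measure (Vec d × Vec d) := fun h =>
    (Q h / μ (C h)) • ((μ.restrict (C h)).map (fun x => (x, eQ h)))
      + (1 - Q h / μ (C h)) • ((μ.restrict (C h)).map (fun x => (x, (0 : Vec d)))) with hmker
  set π : Measure (Vec d × Vec d) := ∑ h ∈ S, mker h with hπ
  have hmf : ∀ c : Vec d, Measurable fun x : Vec d => (x, c) := fun c =>
    measurable_id.prodMk measurable_const
  have ha1 : ∀ h, Q h / μ (C h) ≤ 1 := fun h =>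
    le_trans (ENNReal.div_le_div_right (hQP h) _) ENNReal.div_self_le_one
  have haP : ∀ h, (Q h / μ (C h)) * μ (C h) = Q h := by
    intro h
    rcases eq_or_ne (μ (C h)) 0 with h0 | h0
    · have hq : Q h = 0 := le_antisymm (h0 ▸ hQP h) zero_le
      simp [h0, hq]
    · exact ENNReal.div_mul_cancel h0 (hPfin h)
  have h1aP : ∀ h, (1 - Q h / μ (C h)) * μ (C h) = μ (C h) - Q h := by
    intro h
    rw [ENNReal.sub_mul (fun _ _ => hPfin h), one_mul, haP h]
  have hπapp : ∀ {A : Set (Vec d × Vec d)}, MeasurableSet A →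
      π A = ∑ h ∈ S, ((Q h / μ (C h)) * μ ((fun x => (x, eQ h)) ⁻¹' A ∩ C h)
        + (1 - Q h / μ (C h)) * μ ((fun x => (x, (0 : Vec d))) ⁻¹' A ∩ C h)) := by
    intro A hA
    have h1 : π A = ∑ h ∈ S, (mker h) A := by
      rw [hπ, Measure.coe_finset_sum, Finset.sum_apply]
    rw [h1]
    refine Finset.sum_congr rfl fun h _ => ?_
    rw [hmker]
    simp only [Measure.add_apply, Measure.smul_apply, smul_eq_mul,
      Measure.map_apply (hmf _) hA, Measure.restrict_apply ((hmf _) hA)]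
  -- first marginal
  have hfst : π.map Prod.fst = μ := by
    apply Measure.ext
    intro A hA
    rw [Measure.map_apply measurable_fst hA, hπapp (measurable_fst hA)]
    have hpre : ∀ c : Vec d, ((fun x : Vec d => (x, c)) ⁻¹' (Prod.fst ⁻¹' A)) = A :=
      fun c => rfl
    calc ∑ h ∈ S, ((Q h / μ (C h)) * μ ((fun x : Vec d => (x, eQ h)) ⁻¹' (Prod.fst ⁻¹' A) ∩ C h)
          + (1 - Q h / μ (C h)) * μ ((fun x : Vec d => (x, (0 : Vec d))) ⁻¹' (Prod.fst ⁻¹' A) ∩ C h))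
        = ∑ h ∈ S, μ (A ∩ C h) := by
          refine Finset.sum_congr rfl fun h _ => ?_
          rw [hpre, hpre, ← add_mul, add_tsub_cancel_of_le (ha1 h), one_mul]
      _ = μ A := hsum hA
  set ν : Measure (Vec d) := π.map Prod.snd with hν
  have hπuniv : π Set.univ = 1 := by
    have h1 : (π.map Prod.fst) Set.univ = (1 : ℝ≥0∞) := by rw [hfst]; exact measure_univ
    rwa [Measure.map_apply measurable_fst MeasurableSet.univ, Set.preimage_univ] at h1
  have hνprob : IsProbabilityMeasure ν :=
    ⟨by rw [hν, Measure.map_apply measurable_snd MeasurableSet.univ, Set.preimage_univ, hπuniv]⟩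
  have hsumP : ∑ h ∈ S, μ (C h) = 1 := by
    have h1 := hsum MeasurableSet.univ
    simpa using h1
  have hQsum_le : ∑ h ∈ S, Q h ≤ 1 := hsumP ▸ Finset.sum_le_sum fun h _ => hQP h
  have hsumPQ : ∑ h ∈ S, (μ (C h) - Q h) = 1 - ∑ h ∈ S, Q h := by
    have hadd : ∑ h ∈ S, (μ (C h) - Q h) + ∑ h ∈ S, Q h = 1 := by
      rw [← Finset.sum_add_distrib,
        Finset.sum_congr rfl fun h _ => tsub_add_cancel_of_le (hQP h)]
      exact hsumP
    exact ENNReal.eq_sub_of_add_eq (ne_top_of_le_ne_top ENNReal.one_ne_top hQsum_le) hadd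
  -- snd marginal identification
  set t : Finset ((Fin d → ℚ) × ℚ) := S.image (fun h => (h, qh h)) with htdef
  have hinj : ∀ x ∈ S, ∀ y ∈ S, (fun h => (h, qh h)) x = (fun h => (h, qh h)) y → x = y :=
    fun x _ y _ hxy => congrArg Prod.fst hxy
  have hFmk : Fmk t = (∑ h ∈ S, Q h • Measure.dirac (eQ h))
      + (1 - ∑ h ∈ S, Q h) • Measure.dirac (0 : Vec d) := by
    rw [Fmk, htdef, Finset.sum_image hinj, Finset.sum_image hinj]
  have hν_eq : ν = Fmk t := by
    rw [hFmk]
    apply Measure.ext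
    intro A hA
    rw [hν, Measure.map_apply measurable_snd hA, hπapp (measurable_snd hA)]
    have hpre : ∀ c : Vec d, ((fun x : Vec d => (x, c)) ⁻¹' (Prod.snd ⁻¹' A))
        = if c ∈ A then (Set.univ : Set (Vec d)) else ∅ := by
      intro c
      by_cases hc : c ∈ A <;> · ext x; simp [hc]
    have hterm : ∀ h ∈ S, (Q h / μ (C h)) * μ ((fun x : Vec d => (x, eQ h)) ⁻¹' (Prod.snd ⁻¹' A) ∩ C h)
        + (1 - Q h / μ (C h)) * μ ((fun x : Vec d => (x, (0 : Vec d))) ⁻¹' (Prod.snd ⁻¹' A) ∩ C h)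
        = (if eQ h ∈ A then Q h else 0) + (if (0 : Vec d) ∈ A then μ (C h) - Q h else 0) := by
      intro h _
      rw [hpre, hpre]
      by_cases h1 : eQ h ∈ A <;> by_cases h2 : (0 : Vec d) ∈ A <;>
        simp [h1, h2, Set.univ_inter, Set.empty_inter, haP h, h1aP h]
    rw [Finset.sum_congr rfl hterm, Finset.sum_add_distrib]
    have hrhs : ((∑ h ∈ S, Q h • Measure.dirac (eQ h))
        + (1 - ∑ h ∈ S, Q h) • Measure.dirac (0 : Vec d)) A
        = (∑ h ∈ S, Q h * (Measure.dirac (eQ h)) A)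
          + (1 - ∑ h ∈ S, Q h) * (Measure.dirac (0 : Vec d)) A := by
      rw [Measure.add_apply, Measure.smul_apply, smul_eq_mul, Measure.coe_finset_sum,
        Finset.sum_apply]
      simp only [Measure.smul_apply, smul_eq_mul]
    rw [hrhs]
    congr 1
    · refine Finset.sum_congr rfl fun h _ => ?_
      rw [Measure.dirac_apply' _ hA]
      by_cases h1 : eQ h ∈ A <;> simp [h1, Set.indicator_apply]
    · rw [Measure.dirac_apply' _ hA]
      by_cases h2 : (0 : Vec d) ∈ A <;> simp [h2, Set.indicator_apply, hsumPQ]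
  -- cost
  set FF : Vec d × Vec d → ℝ≥0∞ := fun p => (‖p.1 - p.2‖₊ : ℝ≥0∞) ^ 2 with hFF
  have hFFmeas : Measurable FF := by
    apply Measurable.pow_const
    exact (measurable_fst.sub measurable_snd).nnnorm.coe_nnreal_ennreal
  have hNsq : ∀ h, Measurable fun x : Vec d => (‖x - eQ h‖₊ : ℝ≥0∞) ^ 2 := fun h =>
    ((measurable_id.sub measurable_const).nnnorm.coe_nnreal_ennreal).pow_const 2
  set I1 : (Fin d → ℚ) → ℝ≥0∞ := fun h => ∫⁻ x in C h, (‖x - eQ h‖₊ : ℝ≥0∞) ^ 2 ∂μ with hI1def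
  set I2 : (Fin d → ℚ) → ℝ≥0∞ := fun h => ∫⁻ x in C h, (‖x‖₊ : ℝ≥0∞) ^ 2 ∂μ with hI2def
  have hcost_eq : ∫⁻ p, FF p ∂π = ∑ h ∈ S,
      ((Q h / μ (C h)) * I1 h + (1 - Q h / μ (C h)) * I2 h) := by
    rw [hπ, lintegral_finset_sum_measure]
    refine Finset.sum_congr rfl fun h _ => ?_
    rw [hmker, lintegral_add_measure, lintegral_smul_measure, lintegral_smul_measure,
      lintegral_map hFFmeas (hmf _), lintegral_map hFFmeas (hmf _)]
    simp only [hFF, hI1def, hI2def, sub_zero, smul_eq_mul]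
  -- I1 bound
  set U : (Fin d → ℚ) → Set (Vec d) := fun h => BoxS d R ∩ gridQ d N ⁻¹' {h} with hUdef
  have hUmeas : ∀ h, MeasurableSet (U h) :=
    fun h => (measurableSet_BoxS R).inter ((measurable_gridQ N) (measurableSet_singleton h))
  have hI1sum : ∑ h ∈ S, I1 h ≤ ENNReal.ofReal e1 + ENNReal.ofReal e1 := by
    have hsplit : ∀ h ∈ S, I1 h = (∫⁻ x in U h, (‖x - eQ h‖₊ : ℝ≥0∞) ^ 2 ∂μ)
        + (if h = 0 then ∫⁻ x in (BoxS d R)ᶜ, (‖x‖₊ : ℝ≥0∞) ^ 2 ∂μ else 0) := by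
      intro h _
      rcases eq_or_ne h 0 with rfl | hne
      · have hC0 : C (0 : Fin d → ℚ) = U 0 ∪ (BoxS d R)ᶜ := by
          rw [hCdef, hUdef]
          show CellS d R N 0 = _
          rw [CellS]
          congr 1
          ext x; simp
        rw [hI1def]
        show ∫⁻ x in C (0 : Fin d → ℚ), (‖x - eQ 0‖₊ : ℝ≥0∞) ^ 2 ∂μ = _
        rw [hC0, lintegral_union (measurableSet_BoxS R).compl
          (Disjoint.mono_left Set.inter_subset_left disjoint_compl_right), if_pos rfl]
        simp only [eQ_zero, sub_zero]
        rfl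
      · have hC : C h = U h := by
          rw [hCdef, hUdef]
          show CellS d R N h = _
          rw [CellS]
          have : {x : Vec d | h = 0 ∧ x ∉ BoxS d R} = ∅ := by ext x; simp [hne]
          rw [this, Set.union_empty]
        rw [hI1def]
        show ∫⁻ x in C h, (‖x - eQ h‖₊ : ℝ≥0∞) ^ 2 ∂μ
          = (∫⁻ x in U h, (‖x - eQ h‖₊ : ℝ≥0∞) ^ 2 ∂μ) + _
        rw [if_neg hne, add_zero, hC]
    rw [Finset.sum_congr rfl hsplit, Finset.sum_add_distrib]
    have hpart2 : ∑ h ∈ S, (if h = (0 : Fin d → ℚ) then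
        ∫⁻ x in (BoxS d R)ᶜ, (‖x‖₊ : ℝ≥0∞) ^ 2 ∂μ else 0)
        = ∫⁻ x in (BoxS d R)ᶜ, (‖x‖₊ : ℝ≥0∞) ^ 2 ∂μ := by
      rw [Finset.sum_ite_eq' S (0 : Fin d → ℚ), if_pos h0S]
    have hpart1 : ∑ h ∈ S, (∫⁻ x in U h, (‖x - eQ h‖₊ : ℝ≥0∞) ^ 2 ∂μ)
        ≤ ENNReal.ofReal e1 := by
      have hterm : ∀ h ∈ S, (∫⁻ x in U h, (‖x - eQ h‖₊ : ℝ≥0∞) ^ 2 ∂μ)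
          ≤ ENNReal.ofReal ((d : ℝ) / N ^ 2) * μ (U h) := by
        intro h _
        calc (∫⁻ x in U h, (‖x - eQ h‖₊ : ℝ≥0∞) ^ 2 ∂μ)
            ≤ ∫⁻ _x in U h, ENNReal.ofReal ((d : ℝ) / N ^ 2) ∂μ :=
              setLIntegral_mono measurable_const fun x hx => ennnormsq_le (Cell_dist hN1 hx)
          _ = ENNReal.ofReal ((d : ℝ) / N ^ 2) * μ (U h) := setLIntegral_const _ _
      calc ∑ h ∈ S, (∫⁻ x in U h, (‖x - eQ h‖₊ : ℝ≥0∞) ^ 2 ∂μ)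
          ≤ ∑ h ∈ S, ENNReal.ofReal ((d : ℝ) / N ^ 2) * μ (U h) := Finset.sum_le_sum hterm
        _ = ENNReal.ofReal ((d : ℝ) / N ^ 2) * ∑ h ∈ S, μ (U h) := by
            rw [Finset.mul_sum]
        _ ≤ ENNReal.ofReal ((d : ℝ) / N ^ 2) * 1 := by
            gcongr
            have hUsum : ∑ h ∈ S, μ (U h) = μ (⋃ h ∈ S, U h) :=
              (measure_biUnion_finset
                (fun h _ h' _ hne => by
                  refine Set.disjoint_left.mpr ?_
                  rintro x ⟨_, hg⟩ ⟨_, hg'⟩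
                  rw [Set.mem_preimage, Set.mem_singleton_iff] at hg hg'
                  exact hne (hg ▸ hg' ▸ rfl))
                (fun h _ => hUmeas h)).symm
            rw [hUsum]
            exact prob_le_one
        _ ≤ ENNReal.ofReal e1 := by
            rw [mul_one]
            exact ENNReal.ofReal_le_ofReal hdN
    rw [hpart2]
    exact add_le_add hpart1 hRtail.le
  -- I2 bound
  have hI2 : ∀ h ∈ S, I2 h ≤ 4 * I1 h + ENNReal.ofReal (4 * d * R ^ 2) * μ (C h) := by
    intro h hh
    have hpt : ∀ x : Vec d, (‖x‖₊ : ℝ≥0∞) ^ 2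
        ≤ 4 * (‖x - eQ h‖₊ : ℝ≥0∞) ^ 2 + 4 * (‖eQ h‖₊ : ℝ≥0∞) ^ 2 :=
      fun x => sq_le4 (enn_triangle x (eQ h))
    calc I2 h ≤ ∫⁻ x in C h, (4 * (‖x - eQ h‖₊ : ℝ≥0∞) ^ 2 + 4 * (‖eQ h‖₊ : ℝ≥0∞) ^ 2) ∂μ := by
          rw [hI2def]
          exact lintegral_mono fun x => hpt x
      _ = 4 * I1 h + (4 * (‖eQ h‖₊ : ℝ≥0∞) ^ 2) * μ (C h) := by
          rw [lintegral_add_right _ measurable_const, lintegral_const_mul _ (hNsq h),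
            setLIntegral_const, hI1def]
      _ ≤ 4 * I1 h + ENNReal.ofReal (4 * d * R ^ 2) * μ (C h) := by
          gcongr
          calc 4 * (‖eQ h‖₊ : ℝ≥0∞) ^ 2 ≤ 4 * ENNReal.ofReal ((d : ℝ) * R ^ 2) := by
                gcongr
                exact ennnormsq_le (SGrid_norm hN1 hh)
            _ = ENNReal.ofReal (4 * d * R ^ 2) := by
                rw [show (4 : ℝ) * d * R ^ 2 = 4 * ((d : ℝ) * R ^ 2) by ring,
                  ENNReal.ofReal_mul (by norm_num : (0 : ℝ) ≤ 4), ENNReal.ofReal_ofNat]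
  -- total cost bound
  have hcost : ∫⁻ p, FF p ∂π ≤ ENNReal.ofReal (11 * e1) := by
    rw [hcost_eq]
    have hterm : ∀ h ∈ S, (Q h / μ (C h)) * I1 h + (1 - Q h / μ (C h)) * I2 h
        ≤ 5 * I1 h + ENNReal.ofReal (4 * d * R ^ 2) * (μ (C h) - Q h) := by
      intro h hh
      calc (Q h / μ (C h)) * I1 h + (1 - Q h / μ (C h)) * I2 h
          ≤ 1 * I1 h + (1 - Q h / μ (C h))
              * (4 * I1 h + ENNReal.ofReal (4 * d * R ^ 2) * μ (C h)) := by
            gcongr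
            · exact ha1 h
            · exact hI2 h hh
        _ = I1 h + (1 - Q h / μ (C h)) * (4 * I1 h)
              + ENNReal.ofReal (4 * d * R ^ 2) * ((1 - Q h / μ (C h)) * μ (C h)) := by
            rw [one_mul, mul_add]
            ring
        _ ≤ I1 h + 1 * (4 * I1 h)
              + ENNReal.ofReal (4 * d * R ^ 2) * ((1 - Q h / μ (C h)) * μ (C h)) := by
            gcongr
            exact tsub_le_self
        _ = 5 * I1 h + ENNReal.ofReal (4 * d * R ^ 2) * ((1 - Q h / μ (C h)) * μ (C h)) := by
            rw [one_mul]
            ring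
        _ = 5 * I1 h + ENNReal.ofReal (4 * d * R ^ 2) * (μ (C h) - Q h) := by
            rw [h1aP h]
    calc ∑ h ∈ S, ((Q h / μ (C h)) * I1 h + (1 - Q h / μ (C h)) * I2 h)
        ≤ ∑ h ∈ S, (5 * I1 h + ENNReal.ofReal (4 * d * R ^ 2) * (μ (C h) - Q h)) :=
          Finset.sum_le_sum hterm
      _ = 5 * ∑ h ∈ S, I1 h + ENNReal.ofReal (4 * d * R ^ 2) * ∑ h ∈ S, (μ (C h) - Q h) := by
          rw [Finset.sum_add_distrib, Finset.mul_sum, Finset.mul_sum]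
      _ ≤ 5 * (ENNReal.ofReal e1 + ENNReal.ofReal e1)
           + ENNReal.ofReal (4 * d * R ^ 2) * (S.card * ENNReal.ofReal δ2) := by
          have hsum2 : ∑ h ∈ S, (μ (C h) - Q h) ≤ (S.card : ℝ≥0∞) * ENNReal.ofReal δ2 := by
            calc ∑ h ∈ S, (μ (C h) - Q h) ≤ ∑ _h ∈ S, ENNReal.ofReal δ2 :=
                Finset.sum_le_sum fun h _ => hPQ h
              _ = S.card * ENNReal.ofReal δ2 := by rw [Finset.sum_const, nsmul_eq_mul]
          exact add_le_add (mul_le_mul_right hI1sum 5) (mul_le_mul_right hsum2 _)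
      _ ≤ ENNReal.ofReal (10 * e1) + ENNReal.ofReal e1 := by
          have h5 : 5 * (ENNReal.ofReal e1 + ENNReal.ofReal e1) = ENNReal.ofReal (10 * e1) := by
            rw [← ENNReal.ofReal_add he1.le he1.le,
              show (10 : ℝ) * e1 = 5 * (e1 + e1) by ring,
              ENNReal.ofReal_mul (by norm_num : (0 : ℝ) ≤ 5), ENNReal.ofReal_ofNat]
          rw [h5]
          gcongr
          calc ENNReal.ofReal (4 * d * R ^ 2) * (S.card * ENNReal.ofReal δ2)
              = ENNReal.ofReal (4 * d * R ^ 2 * (S.card * δ2)) := by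
                conv_rhs => rw [ENNReal.ofReal_mul (by positivity : (0:ℝ) ≤ 4 * (d:ℝ) * (R:ℝ) ^ 2),
                  ENNReal.ofReal_mul (Nat.cast_nonneg _ : (0:ℝ) ≤ ((S.card : ℕ) : ℝ)),
                  ENNReal.ofReal_natCast]
            _ ≤ ENNReal.ofReal e1 := by
                apply ENNReal.ofReal_le_ofReal
                rw [hδ2def]
                have hpos : (0:ℝ) < 4 * (d:ℝ) * (R:ℝ) ^ 2 * (S.card:ℝ) + 1 :=
                  add_pos_of_nonneg_of_pos (mul_nonneg (by positivity) (Nat.cast_nonneg _)) one_pos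
                calc (4:ℝ) * d * R ^ 2 * ((S.card:ℝ) * (e1 / (4 * (d:ℝ) * (R:ℝ) ^ 2 * (S.card:ℝ) + 1)))
                    = (4 * (d:ℝ) * R ^ 2 * S.card) * e1 / (4 * (d:ℝ) * R ^ 2 * S.card + 1) := by
                      ring
                  _ ≤ e1 := by
                      rw [div_le_iff₀ hpos]
                      nlinarith [he1.le, (mul_nonneg (by positivity) (Nat.cast_nonneg _) : (0:ℝ) ≤ 4 * (d:ℝ) * R ^ 2 * S.card)]
      _ = ENNReal.ofReal (11 * e1) := by
          rw [← ENNReal.ofReal_add (by positivity) he1.le,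
            show (10:ℝ) * e1 + e1 = 11 * e1 by ring]
  -- conclude
  have hcoupling : IsCoupling π μ ν := ⟨hfst, hν.symm⟩
  have hW2sq : W2sq μ ν ≤ ∫⁻ p, FF p ∂π := by
    rw [W2sq]
    exact iInf₂_le π hcoupling
  have hlt : W2sq μ ν < ENNReal.ofReal (ε ^ 2) := by
    refine lt_of_le_of_lt (hW2sq.trans hcost) ?_
    rw [ENNReal.ofReal_lt_ofReal_iff (by positivity)]
    have h12 : 0 < ε ^ 2 := by positivity
    rw [he1def]
    linarith
  have hW2 : W2 μ ν < ε := by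
    rw [W2, Real.sqrt_lt' hε]
    exact ENNReal.toReal_lt_of_lt_ofReal hlt
  -- second moment of ν
  have hsec : secondMoment ν < ⊤ := by
    have hm2 : Measurable fun y : Vec d => (‖y‖₊ : ℝ≥0∞) ^ 2 :=
      measurable_nnnorm.coe_nnreal_ennreal.pow_const 2
    rw [secondMoment, hν, lintegral_map hm2 measurable_snd]
    have hb : ∫⁻ p, (‖p.2‖₊ : ℝ≥0∞) ^ 2 ∂π
        ≤ 4 * ∫⁻ p, FF p ∂π + 4 * ∫⁻ p, (‖p.1‖₊ : ℝ≥0∞) ^ 2 ∂π := by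
      have hfmeas : Measurable fun p : Vec d × Vec d => (‖p.1‖₊ : ℝ≥0∞) ^ 2 :=
        (measurable_fst.nnnorm.coe_nnreal_ennreal).pow_const 2
      calc ∫⁻ p, (‖p.2‖₊ : ℝ≥0∞) ^ 2 ∂π
          ≤ ∫⁻ p, (4 * (‖(p : Vec d × Vec d).1 - p.2‖₊ : ℝ≥0∞) ^ 2
              + 4 * (‖(p : Vec d × Vec d).1‖₊ : ℝ≥0∞) ^ 2) ∂π := by
            apply lintegral_mono
            intro p
            apply sq_le4
            exact enn_triangle' p.1 p.2
        _ = 4 * ∫⁻ p, FF p ∂π + 4 * ∫⁻ p, (‖p.1‖₊ : ℝ≥0∞) ^ 2 ∂π := by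
            rw [lintegral_add_left (hFFmeas.const_mul 4), lintegral_const_mul _ hFFmeas,
              lintegral_const_mul _ hfmeas]
    have hcostfin : ∫⁻ p, FF p ∂π < ⊤ := lt_of_le_of_lt hcost ENNReal.ofReal_lt_top
    have hfirst : ∫⁻ p, (‖(p : Vec d × Vec d).1‖₊ : ℝ≥0∞) ^ 2 ∂π < ⊤ := by
      have heq : ∫⁻ p, (‖(p : Vec d × Vec d).1‖₊ : ℝ≥0∞) ^ 2 ∂π
          = ∫⁻ x, (‖x‖₊ : ℝ≥0∞) ^ 2 ∂μ := by
        rw [← hfst, lintegral_map hm2 measurable_fst]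
      rw [heq]
      exact lt_of_le_of_ne le_top hmom'
    calc ∫⁻ p, (‖(p : Vec d × Vec d).2‖₊ : ℝ≥0∞) ^ 2 ∂π
        ≤ 4 * ∫⁻ p, FF p ∂π + 4 * ∫⁻ p, (‖(p : Vec d × Vec d).1‖₊ : ℝ≥0∞) ^ 2 ∂π := hb
      _ < ⊤ := ENNReal.add_lt_top.mpr
          ⟨ENNReal.mul_lt_top (by norm_num) hcostfin,
            ENNReal.mul_lt_top (by norm_num) hfirst⟩
  refine ⟨t, ?_, ?_⟩
  · rw [← hν_eq]
    exact ⟨hνprob, hsec⟩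
  · rw [← hν_eq]
    exact hW2

end VD

end VDHelpers2

section VDHelpers3

namespace VD

variable {d : ℕ}

lemma exists_dense_seq :
    ∃ D : ℕ → Measure (Vec d), (∀ k, MemP2 (D k)) ∧
      ∀ μ : Measure (Vec d), MemP2 μ → ∀ ε : ℝ, 0 < ε → ∃ k, W2 μ (D k) < ε := by
  classical
  obtain ⟨g, hg⟩ := exists_surjective_nat (Finset ((Fin d → ℚ) × ℚ))
  refine ⟨fun k => if MemP2 (Fmk (g k)) then Fmk (g k) else Measure.dirac 0, fun k => ?_, ?_⟩
  · show MemP2 (if MemP2 (Fmk (g k)) then Fmk (g k) else Measure.dirac 0)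
    by_cases hk : MemP2 (Fmk (g k))
    · rwa [if_pos hk]
    · rw [if_neg hk]; exact memP2_dirac0
  · intro μ hμ ε hε
    obtain ⟨t, ht1, ht2⟩ := exists_close_discrete μ hμ hε
    obtain ⟨k, hk⟩ := hg t
    refine ⟨k, ?_⟩
    show W2 μ (if MemP2 (Fmk (g k)) then Fmk (g k) else Measure.dirac 0) < ε
    rw [hk, if_pos ht1]
    exact ht2

end VD

end VDHelpers3
theorem vanishing_discount_construction
    {Ω : Type*} {m0 : MeasurableSpace Ω} (P : Measure Ω) [IsProbabilityMeasure P]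
    (F : Filtration ℝ m0) {d m : ℕ} (B : ℝ → Ω → (Fin m → ℝ)) (hB : IsBM P F B)
    (G : MeasurableSpace Ω) (hG : G ≤ F 0)
    {A : Type*} [MeasurableSpace A] [TopologicalSpace A] [PolishSpace A] [BorelSpace A]
    [Nonempty A]
    (b : Vec d → Measure (Vec d) → A → Vec d)
    (σ : Vec d → Measure (Vec d) → A → Matrix (Fin d) (Fin m) ℝ)
    (Lbx Lbμ Lσx Lσμ M : ℝ) (hcoef : StandingCoeffs b σ Lbx Lbμ Lσx Lσμ M)
    (η : ℝ) (hdiss : Dissipative P b σ η)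
    (f : Vec d → Measure (Vec d) → A → ℝ) (Mf Lf : ℝ)
    (hf : RewardAssumptions f Mf Lf)
    (Xsol : ℝ → (Ω → Vec d) → (ℝ → Ω → A) → ℝ → Ω → Vec d)
    (hXsol : ∀ (t : ℝ) (ξ : Ω → Vec d) (α : ℝ → Ω → A) (T : ℝ), 0 ≤ t → t ≤ T →
      StronglyMeasurable[F t] ξ → MemLp ξ 2 P → IsAdmissible F α →
      IsSol P F b σ t T ξ α (Xsol t ξ α))
    (hrich : ∀ μ : Measure (Vec d), MemP2 μ →
      ∃ ξ : Ω → Vec d, StronglyMeasurable[G] ξ ∧ MemLp ξ 2 P ∧ law P ξ = μ)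
    (v : ℝ → Measure (Vec d) → ℝ)
    (hv : ∀ β : ℝ, 0 < β → ∀ μ : Measure (Vec d), MemP2 μ →
      ∀ ξ : Ω → Vec d, StronglyMeasurable[G] ξ → MemLp ξ 2 P → law P ξ = μ →
      v β μ = ⨆ α : {α : ℝ → Ω → A // IsAdmissible F α}, discJ P f β (Xsol 0 ξ α.1) α.1)
    (hvB : ∀ β : ℝ, 0 < β → ∀ μ : Measure (Vec d), MemP2 μ → β * |v β μ| ≤ Mf)
    (L : ℝ)
    (hvLip : ∀ β : ℝ, 0 < β → ∀ μ ν : Measure (Vec d), MemP2 μ → MemP2 ν →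
      |v β μ - v β ν| ≤ L * W2 μ ν)
    :
    ∃ (βseq : ℕ → ℝ) (lam : ℝ) (φ : Measure (Vec d) → ℝ),
      (∀ n, 0 < βseq n) ∧ Tendsto βseq atTop (𝓝 0) ∧
      Tendsto (fun n => βseq n * v (βseq n) (Measure.dirac 0)) atTop (𝓝 lam) ∧
      (∀ K : Set (Measure (Vec d)), W2SeqCompact K →
        TendstoUniformlyOn (fun n μ => v (βseq n) μ - v (βseq n) (Measure.dirac 0))
          φ atTop K) ∧
      (∀ μ : Measure (Vec d), MemP2 μ → |φ μ| ≤ L * W2 μ (Measure.dirac 0)) ∧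
      (∀ μ ν : Measure (Vec d), MemP2 μ → MemP2 ν → |φ μ - φ ν| ≤ L * W2 μ ν) := by
  classical
  have hδ0 : MemP2 (Measure.dirac (0 : Vec d)) := VD.memP2_dirac0
  have hW2nn : ∀ μ ν : Measure (Vec d), 0 ≤ W2 μ ν := fun _ _ => Real.sqrt_nonneg _
  obtain ⟨D, hDmem, hDdense⟩ := VD.exists_dense_seq (d := d)
  have hβ0pos : ∀ n : ℕ, 0 < (1 : ℝ) / (n + 1) := fun n => by positivity
  set h0 : ℕ → Measure (Vec d) → ℝ :=
    fun n μ => v (1 / (n + 1)) μ - v (1 / (n + 1)) (Measure.dirac 0) with hh0def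
  have hh0lip : ∀ (n : ℕ) (μ ν : Measure (Vec d)), MemP2 μ → MemP2 ν →
      |h0 n μ - h0 n ν| ≤ L * W2 μ ν := by
    intro n μ ν hμ hν
    have h := hvLip (1 / (n + 1)) (hβ0pos n) μ ν hμ hν
    simpa [hh0def, sub_sub_sub_cancel_right] using h
  have hh0bd : ∀ (n : ℕ) (μ : Measure (Vec d)), MemP2 μ →
      |h0 n μ| ≤ L * W2 μ (Measure.dirac 0) := by
    intro n μ hμ
    exact hvLip (1 / (n + 1)) (hβ0pos n) μ _ hμ hδ0
  -- compact product extraction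
  set MM : ℕ → ℝ := fun k => L * W2 (D k) (Measure.dirac 0) with hMM
  set u : ℕ → (ℕ → ℝ) × ℝ :=
    fun n => (fun k => h0 n (D k),
      (1 / (n + 1) : ℝ) * v (1 / (n + 1)) (Measure.dirac 0)) with hu
  have hcomp : IsCompact ((Set.univ.pi fun k => Set.Icc (-(MM k)) (MM k)) ×ˢ Set.Icc (-Mf) Mf) :=
    (isCompact_univ_pi fun k => isCompact_Icc).prod isCompact_Icc
  have humem : ∀ n, u n ∈
      (Set.univ.pi fun k => Set.Icc (-(MM k)) (MM k)) ×ˢ Set.Icc (-Mf) Mf := by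
    intro n
    constructor
    · intro k _
      exact Set.mem_Icc.mpr (abs_le.mp (hh0bd n (D k) (hDmem k)))
    · have h1 := hvB (1 / (n + 1)) (hβ0pos n) _ hδ0
      have h2 : |(1 / (n + 1) : ℝ) * v (1 / (n + 1)) (Measure.dirac 0)| ≤ Mf := by
        rw [abs_mul, abs_of_pos (hβ0pos n)]
        exact h1
      exact Set.mem_Icc.mpr (abs_le.mp h2)
  obtain ⟨a, -, ψ, hψ, hconv⟩ := hcomp.tendsto_subseq humem
  have hconv1 : ∀ k, Tendsto (fun n => h0 (ψ n) (D k)) atTop (𝓝 (a.1 k)) := by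
    intro k
    have hfst : Tendsto (fun n => (u (ψ n)).1) atTop (𝓝 a.1) :=
      (continuous_fst.tendsto a).comp hconv
    exact tendsto_pi_nhds.mp hfst k
  have hconv2 : Tendsto
      (fun n => (1 / (ψ n + 1) : ℝ) * v (1 / (ψ n + 1)) (Measure.dirac 0))
      atTop (𝓝 a.2) := (continuous_snd.tendsto a).comp hconv
  have hβψpos : ∀ n : ℕ, 0 < (1 : ℝ) / (ψ n + 1) := fun n => hβ0pos (ψ n)
  -- pointwise limits everywhere on P2
  have hcauchy : ∀ μ : Measure (Vec d), MemP2 μ →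
      ∃ c, Tendsto (fun n => h0 (ψ n) μ) atTop (𝓝 c) := by
    intro μ hμ
    apply cauchySeq_tendsto_of_complete
    rw [Metric.cauchySeq_iff]
    intro ε hε
    obtain ⟨k, hk⟩ := hDdense μ hμ (ε / (4 * (|L| + 1))) (by positivity)
    have hck : CauchySeq (fun n => h0 (ψ n) (D k)) := (hconv1 k).cauchySeq
    obtain ⟨N, hN⟩ := Metric.cauchySeq_iff.mp hck (ε / 2) (by positivity)
    refine ⟨N, fun m hm n hn => ?_⟩
    have e1 : |h0 (ψ m) μ - h0 (ψ m) (D k)| ≤ |L| * W2 μ (D k) :=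
      le_trans (hh0lip (ψ m) μ (D k) hμ (hDmem k))
        (mul_le_mul_of_nonneg_right (le_abs_self L) (hW2nn _ _))
    have e2 : |h0 (ψ n) μ - h0 (ψ n) (D k)| ≤ |L| * W2 μ (D k) :=
      le_trans (hh0lip (ψ n) μ (D k) hμ (hDmem k))
        (mul_le_mul_of_nonneg_right (le_abs_self L) (hW2nn _ _))
    have e3 : dist (h0 (ψ m) (D k)) (h0 (ψ n) (D k)) < ε / 2 := hN m hm n hn
    have e4 : |L| * W2 μ (D k) ≤ |L| * (ε / (4 * (|L| + 1))) :=
      mul_le_mul_of_nonneg_left hk.le (abs_nonneg L)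
    have e5 : |L| * (ε / (4 * (|L| + 1))) ≤ ε / 4 := by
      have h4 : (0 : ℝ) < 4 * (|L| + 1) := by positivity
      calc |L| * (ε / (4 * (|L| + 1))) = (|L| * ε) / (4 * (|L| + 1)) := by ring
        _ ≤ ε / 4 := by
          rw [div_le_div_iff₀ h4 (by norm_num : (0 : ℝ) < 4)]
          nlinarith [abs_nonneg L, hε.le]
    rw [Real.dist_eq]
    rw [Real.dist_eq] at e3
    have hsplit : h0 (ψ m) μ - h0 (ψ n) μ = (h0 (ψ m) μ - h0 (ψ m) (D k))
        + (h0 (ψ m) (D k) - h0 (ψ n) (D k)) + (h0 (ψ n) (D k) - h0 (ψ n) μ) := by ring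
    rw [hsplit]
    have habs := abs_add_three (h0 (ψ m) μ - h0 (ψ m) (D k))
      (h0 (ψ m) (D k) - h0 (ψ n) (D k)) (h0 (ψ n) (D k) - h0 (ψ n) μ)
    have e2' : |h0 (ψ n) (D k) - h0 (ψ n) μ| ≤ |L| * W2 μ (D k) := by
      rw [abs_sub_comm]; exact e2
    linarith
  choose climit hclimit using hcauchy
  set φ : Measure (Vec d) → ℝ :=
    fun μ => if hμ : MemP2 μ then climit μ hμ else 0 with hφdef
  have hφ : ∀ μ : Measure (Vec d), MemP2 μ →
      Tendsto (fun n => h0 (ψ n) μ) atTop (𝓝 (φ μ)) := by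
    intro μ hμ
    have h := hclimit μ hμ
    have hval : φ μ = climit μ hμ := by rw [hφdef]; exact dif_pos hμ
    rw [hval]
    exact h
  have hφlip : ∀ μ ν : Measure (Vec d), MemP2 μ → MemP2 ν →
      |φ μ - φ ν| ≤ L * W2 μ ν := by
    intro μ ν hμ hν
    have ht : Tendsto (fun n => |h0 (ψ n) μ - h0 (ψ n) ν|) atTop (𝓝 |φ μ - φ ν|) :=
      ((hφ μ hμ).sub (hφ ν hν)).abs
    exact le_of_tendsto ht (Filter.Eventually.of_forall fun n => hh0lip (ψ n) μ ν hμ hν)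
  have hφbd : ∀ μ : Measure (Vec d), MemP2 μ → |φ μ| ≤ L * W2 μ (Measure.dirac 0) := by
    intro μ hμ
    have ht : Tendsto (fun n => |h0 (ψ n) μ|) atTop (𝓝 |φ μ|) := (hφ μ hμ).abs
    exact le_of_tendsto ht (Filter.Eventually.of_forall fun n => hh0bd (ψ n) μ hμ)
  refine ⟨fun n => 1 / (ψ n + 1), a.2, φ, fun n => hβψpos n, ?_, hconv2, ?_, hφbd, hφlip⟩
  · -- βseq → 0
    apply squeeze_zero (fun n => (hβψpos n).le) (fun n => ?_)
      tendsto_one_div_add_atTop_nhds_zero_nat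
    have hle : (n : ℝ) + 1 ≤ (ψ n : ℝ) + 1 := by
      have hn : n ≤ ψ n := hψ.le_apply
      have hcast : (n : ℝ) ≤ (ψ n : ℝ) := by exact_mod_cast hn
      linarith
    exact one_div_le_one_div_of_le (by positivity) hle
  · -- uniform convergence on W2-compact sets
    intro K hK
    rw [Metric.tendstoUniformlyOn_iff]
    intro ε hε
    by_contra hcon
    rw [Filter.not_eventually] at hcon
    have hfreq : ∃ᶠ n in atTop, ∃ x ∈ K, ε ≤ dist (φ x) (h0 (ψ n) x) := by
      apply hcon.mono
      intro n hn
      push_neg at hn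
      obtain ⟨x, hxK, hx⟩ := hn
      exact ⟨x, hxK, hx⟩
    obtain ⟨g, hgmono, hgprop⟩ := Filter.extraction_of_frequently_atTop hfreq
    choose μs hμsK hμsdist using hgprop
    obtain ⟨ν, θ, hνK, hθmono, hWto⟩ := hK.2 μs hμsK
    have hν2 : MemP2 ν := hK.1 ν hνK
    have hmid : Tendsto (fun j => dist (φ ν) (h0 (ψ (g (θ j))) ν)) atTop (𝓝 0) := by
      have h1 : Tendsto (fun j => h0 (ψ (g (θ j))) ν) atTop (𝓝 (φ ν)) :=
        (hφ ν hν2).comp ((hgmono.comp hθmono).tendsto_atTop)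
      have h2 := Filter.Tendsto.dist
        (tendsto_const_nhds : Tendsto (fun _ : ℕ => φ ν) atTop (𝓝 (φ ν))) h1
      simpa using h2
    have hterm : ∀ j, ε ≤ 2 * (|L| * W2 (μs (θ j)) ν)
        + dist (φ ν) (h0 (ψ (g (θ j))) ν) := by
      intro j
      have hμj : MemP2 (μs (θ j)) := hK.1 _ (hμsK (θ j))
      have h1 : ε ≤ dist (φ (μs (θ j))) (h0 (ψ (g (θ j))) (μs (θ j))) := hμsdist (θ j)
      have h2 : |φ (μs (θ j)) - φ ν| ≤ |L| * W2 (μs (θ j)) ν :=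
        le_trans (hφlip _ ν hμj hν2)
          (mul_le_mul_of_nonneg_right (le_abs_self L) (hW2nn _ _))
      have h3 : |h0 (ψ (g (θ j))) (μs (θ j)) - h0 (ψ (g (θ j))) ν| ≤ |L| * W2 (μs (θ j)) ν :=
        le_trans (hh0lip _ _ ν hμj hν2)
          (mul_le_mul_of_nonneg_right (le_abs_self L) (hW2nn _ _))
      have h5 : |h0 (ψ (g (θ j))) ν - h0 (ψ (g (θ j))) (μs (θ j))| ≤ |L| * W2 (μs (θ j)) ν := by
        rw [abs_sub_comm]; exact h3
      have h4 : dist (φ (μs (θ j))) (h0 (ψ (g (θ j))) (μs (θ j)))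
          ≤ |φ (μs (θ j)) - φ ν| + dist (φ ν) (h0 (ψ (g (θ j))) ν)
            + |h0 (ψ (g (θ j))) ν - h0 (ψ (g (θ j))) (μs (θ j))| := by
        rw [Real.dist_eq, Real.dist_eq]
        have hsp : φ (μs (θ j)) - h0 (ψ (g (θ j))) (μs (θ j))
            = (φ (μs (θ j)) - φ ν) + (φ ν - h0 (ψ (g (θ j))) ν)
              + (h0 (ψ (g (θ j))) ν - h0 (ψ (g (θ j))) (μs (θ j))) := by ring
        rw [hsp]
        exact abs_add_three _ _ _
      linarith
    have hrhs : Tendsto (fun j => 2 * (|L| * W2 (μs (θ j)) ν)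
        + dist (φ ν) (h0 (ψ (g (θ j))) ν)) atTop (𝓝 0) := by
      have h1 : Tendsto (fun j => 2 * (|L| * W2 (μs (θ j)) ν)) atTop (𝓝 0) := by
        have h2 := (hWto.const_mul (|L|)).const_mul (2 : ℝ)
        simpa using h2
      simpa using h1.add hmid
    have hfin : ε ≤ 0 := ge_of_tendsto' hrhs hterm
    linarith

end
end
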